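/- arXiv:1510.03943 — 2 statements merged into one kernel-verified Lean document; each statement's English description precedes it below -/
import Mathlib

section
/- Let ω ∈ Ω and let 𝒞 be a nonempty collection of contours of φ(ω), viewed as a closed subset of ℝ². Then any two vertices x, y ∈ ℤ² lying in the same connected component of ℝ² ∖ 𝒞 are joined by a path of edges of G that lies entirely in that same connected component of ℝ² ∖ 𝒞. -/
open scoped Classical ENNReal
open MeasureTheory

noncomputable section

namespace CP

/-! ### Site configurations and clusters on the square lattice `G = ℤ²`.
States `0` / `1` are encoded as `false` / `true`. -/

abbrev Config := ℤ × ℤ → Bool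

/-- Adjacency in the square lattice `G` on `ℤ²` (ℓ¹-distance one). -/
def ZAdj (u v : ℤ × ℤ) : Prop := |u.1 - v.1| + |u.2 - v.2| = 1

/-- The hard local constraint: around each black face (lower-left corner `(m,n)` with
`m + n` even), the corners read clockwise from the lower-left corner form one of the
words `0000, 1111, 0011, 1100, 0110, 1001`; equivalently, the two vertical sides are
each monochromatic, or the two horizontal sides are each monochromatic. -/
def Constrained (ω : Config) : Prop :=
  ∀ m n : ℤ, Even (m + n) →
    ((ω (m, n) = ω (m, n + 1) ∧ ω (m + 1, n) = ω (m + 1, n + 1)) ∨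
     (ω (m, n) = ω (m + 1, n) ∧ ω (m, n + 1) = ω (m + 1, n + 1)))

/-- `u` and `v` are joined by a path of vertices all having the same state. -/
def SameCluster (ω : Config) (u v : ℤ × ℤ) : Prop :=
  Relation.ReflTransGen (fun a b => ZAdj a b ∧ ω a = ω b) u v

/-- The cluster of the vertex `v`. -/
def cluster (ω : Config) (v : ℤ × ℤ) : Set (ℤ × ℤ) := {w | SameCluster ω v w}

def IsCluster (ω : Config) (D : Set (ℤ × ℤ)) : Prop := ∃ v, D = cluster ω v

def infiniteClusters (ω : Config) : Set (Set (ℤ × ℤ)) := {D | IsCluster ω D ∧ D.Infinite}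

/-! ### Contours.
An edge of `ℒ₁ ∪ ℒ₂` is encoded by the black face it crosses (its lower-left corner)
together with its direction (`true` = horizontal).  Endpoints are recorded in doubled
coordinates, so that the vertex `(x, y)` of the plane corresponds to `(2x, 2y)`. -/

abbrev BEdge := (ℤ × ℤ) × Bool

def IsBlackFace (f : ℤ × ℤ) : Prop := Even (f.1 + f.2)

/-- Edges of `ℒ₁` (whose vertices are the points `(m - 1/2, n + 1/2)`, `m, n` even). -/
def IsPrimalEdge (e : BEdge) : Prop :=
  (e.2 = true ∧ Even e.1.1 ∧ Even e.1.2) ∨ (e.2 = false ∧ Odd e.1.1 ∧ Odd e.1.2)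

/-- Edges of `ℒ₂` (whose vertices are the points `(m - 1/2, n + 1/2)`, `m, n` odd). -/
def IsDualEdge (e : BEdge) : Prop :=
  (e.2 = true ∧ Odd e.1.1 ∧ Odd e.1.2) ∨ (e.2 = false ∧ Even e.1.1 ∧ Even e.1.2)

/-- The two endpoints of a contour edge, in doubled coordinates. -/
def edgeEnds (e : BEdge) : (ℤ × ℤ) × (ℤ × ℤ) :=
  if e.2 then ((2 * e.1.1 - 1, 2 * e.1.2 + 1), (2 * e.1.1 + 3, 2 * e.1.2 + 1))
  else ((2 * e.1.1 + 1, 2 * e.1.2 - 1), (2 * e.1.1 + 1, 2 * e.1.2 + 3))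

def shareEnd (e₁ e₂ : BEdge) : Prop :=
  (edgeEnds e₁).1 = (edgeEnds e₂).1 ∨ (edgeEnds e₁).1 = (edgeEnds e₂).2 ∨
  (edgeEnds e₁).2 = (edgeEnds e₂).1 ∨ (edgeEnds e₁).2 = (edgeEnds e₂).2

/-- The contour configuration `φ(ω)`: a horizontal (resp. vertical) edge crossing the
black face with lower-left corner `(m, n)` is present iff the two lower corners differ
from the two upper ones (resp. the two left corners differ from the two right ones). -/
def contourCfg (ω : Config) (e : BEdge) : Bool :=
  if IsBlackFace e.1 then
    (if e.2 then ω (e.1.1, e.1.2) != ω (e.1.1, e.1.2 + 1)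
     else ω (e.1.1, e.1.2) != ω (e.1.1 + 1, e.1.2))
  else false

def SameContourB (φ : BEdge → Bool) (e e' : BEdge) : Prop :=
  Relation.ReflTransGen (fun a b => φ a = true ∧ φ b = true ∧ shareEnd a b) e e'

def contourB (φ : BEdge → Bool) (e : BEdge) : Set BEdge := {e' | SameContourB φ e e'}

/-- `C` is a contour (connected component of present edges) of the edge configuration `φ`. -/
def IsContourB (φ : BEdge → Bool) (C : Set BEdge) : Prop := ∃ e, φ e = true ∧ C = contourB φ e

def IsContour (ω : Config) (C : Set BEdge) : Prop := IsContourB (contourCfg ω) C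

def IsPrimalContour (ω : Config) (C : Set BEdge) : Prop := IsContour ω C ∧ ∀ e ∈ C, IsPrimalEdge e

def IsDualContour (ω : Config) (C : Set BEdge) : Prop := IsContour ω C ∧ ∀ e ∈ C, IsDualEdge e

/-- The vertex `v` of `G` is at Euclidean distance `1/2` from the contour edge `e`
(equivalently, `v` is a corner of the black face crossed by `e`). -/
def EdgeIncVtx (e : BEdge) (v : ℤ × ℤ) : Prop :=
  (v.1 = e.1.1 ∨ v.1 = e.1.1 + 1) ∧ (v.2 = e.1.2 ∨ v.2 = e.1.2 + 1)

/-- The contour `C` is incident to the cluster `D`. -/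
def ContourIncCluster (C : Set BEdge) (D : Set (ℤ × ℤ)) : Prop := ∃ e ∈ C, ∃ v ∈ D, EdgeIncVtx e v

/-- The edge of `G` joining `u` and `v` is crossed by the contour edge `e`
(doubled midpoints are compared). -/
def crossesG (e : BEdge) (u v : ℤ × ℤ) : Prop :=
  ZAdj u v ∧
    (if e.2 then
      (u.1 + v.1, u.2 + v.2) = (2 * e.1.1, 2 * e.1.2 + 1) ∨
      (u.1 + v.1, u.2 + v.2) = (2 * e.1.1 + 2, 2 * e.1.2 + 1)
     else
      (u.1 + v.1, u.2 + v.2) = (2 * e.1.1 + 1, 2 * e.1.2) ∨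
      (u.1 + v.1, u.2 + v.2) = (2 * e.1.1 + 1, 2 * e.1.2 + 2))

/-- The connected component of `v` in the graph obtained from `G` by deleting every
edge crossed by some contour edge belonging to `R`. -/
def GminusComp (R : Set BEdge) (v : ℤ × ℤ) : Set (ℤ × ℤ) :=
  {w | Relation.ReflTransGen (fun a b => ZAdj a b ∧ ¬∃ e ∈ R, crossesG e a b) v w}

/-! ### Ends of contours -/

/-- The connected component of the edge `e` within the edge set `S`. -/
def compIn (S : Set BEdge) (e : BEdge) : Set BEdge :=
  {e' | Relation.ReflTransGen (fun a b => a ∈ S ∧ b ∈ S ∧ shareEnd a b) e e'}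

/-- The contour `C` has at most two ends: removing any finite set of edges leaves at
most two infinite components. -/
def AtMostTwoEnds (C : Set BEdge) : Prop :=
  ∀ F : Set BEdge, F.Finite →
    ∀ e₁ e₂ e₃, e₁ ∈ C \ F → e₂ ∈ C \ F → e₃ ∈ C \ F →
      (compIn (C \ F) e₁).Infinite → (compIn (C \ F) e₂).Infinite →
      (compIn (C \ F) e₃).Infinite →
      compIn (C \ F) e₁ = compIn (C \ F) e₂ ∨ compIn (C \ F) e₁ = compIn (C \ F) e₃ ∨
        compIn (C \ F) e₂ = compIn (C \ F) e₃

/-! ### Planar embedding.  Note that `ℝ × ℝ` carries the ℓ∞ (sup) product metric. -/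

abbrev Plane := ℝ × ℝ

/-- The point of the plane with doubled coordinates `p`. -/
def ptOfDoubled (p : ℤ × ℤ) : Plane := ((p.1 : ℝ) / 2, (p.2 : ℝ) / 2)

/-- The planar position of a vertex of `G`. -/
def vtxPt (v : ℤ × ℤ) : Plane := ((v.1 : ℝ), (v.2 : ℝ))

/-- The closed planar segment realizing a contour edge. -/
def segOf (e : BEdge) : Set Plane :=
  segment ℝ (ptOfDoubled (edgeEnds e).1) (ptOfDoubled (edgeEnds e).2)

/-- The closed subset of `ℝ²` realizing a set of contour edges. -/
def contourSet (C : Set BEdge) : Set Plane := ⋃ e ∈ C, segOf e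

/-- The unbounded connected components of the complement of `S ⊆ ℝ²`. -/
def unbComps (S : Set Plane) : Set (Set Plane) :=
  {T | (∃ x ∈ Sᶜ, T = connectedComponentIn Sᶜ x) ∧ ¬Bornology.IsBounded T}

/-- The family `𝒞₂` of infinite contours whose planar complement has exactly two
unbounded components. -/
def C2set (ω : Config) : Set (Set BEdge) :=
  {C | IsContour ω C ∧ C.Infinite ∧ (unbComps (contourSet C)).ncard = 2}

/-! ### Interfaces, drawn on the dual `[Aℤ²]*` of the augmented square grid. -/

/-- `R(e)`: points at ℓ∞-distance at most `1/4` from the segment `e`. -/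
def Rnbhd (e : BEdge) : Set Plane := {x | Metric.infDist x (segOf e) ≤ 1 / 4}

/-- Edges of `[Aℤ²]*`, encoded by (index of) their lower-left endpoint and a direction
(`true` = horizontal); the vertex with index `(k, l)` is the point `(k/2 + 1/4, l/2 + 1/4)`. -/
abbrev QEdge := (ℤ × ℤ) × Bool

def qVtx (p : ℤ × ℤ) : Plane := ((p.1 : ℝ) / 2 + 1 / 4, (p.2 : ℝ) / 2 + 1 / 4)

def qEnds (q : QEdge) : (ℤ × ℤ) × (ℤ × ℤ) :=
  if q.2 then (q.1, (q.1.1 + 1, q.1.2)) else (q.1, (q.1.1, q.1.2 + 1))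

def qSeg (q : QEdge) : Set Plane := segment ℝ (qVtx (qEnds q).1) (qVtx (qEnds q).2)

/-- The interface of a contour `C`: the edges of `[Aℤ²]*` constituting the topological
boundary of `⋃ e ∈ C, R(e)`. -/
def ifaceEdges (C : Set BEdge) : Set QEdge := {q | qSeg q ⊆ frontier (⋃ e ∈ C, Rnbhd e)}

/-- The interface of the contour configuration `φ(ω)`: the union of the interfaces of
all contours. -/
def interfaceOf (ω : Config) : Set QEdge := ⋃ C ∈ {C | IsContour ω C}, ifaceEdges C

def qShare (q₁ q₂ : QEdge) : Prop :=
  (qEnds q₁).1 = (qEnds q₂).1 ∨ (qEnds q₁).1 = (qEnds q₂).2 ∨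
  (qEnds q₁).2 = (qEnds q₂).1 ∨ (qEnds q₁).2 = (qEnds q₂).2

def qCompIn (S : Set QEdge) (q : QEdge) : Set QEdge :=
  {q' | Relation.ReflTransGen (fun a b => a ∈ S ∧ b ∈ S ∧ qShare a b) q q'}

/-- `I` is a connected component of the interface of `φ(ω)`. -/
def IsInterfaceComp (ω : Config) (I : Set QEdge) : Prop :=
  ∃ q ∈ interfaceOf ω, I = qCompIn (interfaceOf ω) q

/-- The subset of `ℝ²` realizing a set of `[Aℤ²]*`-edges. -/
def qRealize (I : Set QEdge) : Set Plane := ⋃ q ∈ I, qSeg q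

/-- `F_I`: the vertices of `G` at ℓ∞-distance exactly `1/4` from `I`. -/
def interfaceNbrs (I : Set QEdge) : Set (ℤ × ℤ) :=
  {v | Metric.infDist (vtxPt v) (qRealize I) = 1 / 4}

/-- The edge set `I` is a doubly-infinite self-avoiding path in `[Aℤ²]*`. -/
def IsBiInfPathQ (I : Set QEdge) : Prop :=
  ∃ γ : ℤ → ℤ × ℤ, Function.Injective γ ∧
    (∀ i : ℤ, ∃ q ∈ I, qEnds q = (γ i, γ (i + 1)) ∨ qEnds q = (γ (i + 1), γ i)) ∧
    (∀ q ∈ I, ∃ i : ℤ, qEnds q = (γ i, γ (i + 1)) ∨ qEnds q = (γ (i + 1), γ i))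

/-- The edge set `I` is a (finite) self-avoiding cycle in `[Aℤ²]*`. -/
def IsCycleQ (I : Set QEdge) : Prop :=
  ∃ n : ℕ, 0 < n ∧ ∃ γ : ℤ → ℤ × ℤ,
    (∀ i : ℤ, γ (i + n) = γ i) ∧
    (∀ i j : ℤ, 0 ≤ i → i < j → j < n → γ i ≠ γ j) ∧
    (∀ i : ℤ, ∃ q ∈ I, qEnds q = (γ i, γ (i + 1)) ∨ qEnds q = (γ (i + 1), γ i)) ∧
    (∀ q ∈ I, ∃ i : ℤ, qEnds q = (γ i, γ (i + 1)) ∨ qEnds q = (γ (i + 1), γ i))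

/-- `F` is the vertex set of a doubly-infinite self-avoiding path in `G`. -/
def IsBiInfPathVtxSet (F : Set (ℤ × ℤ)) : Prop :=
  ∃ p : ℤ → ℤ × ℤ, Function.Injective p ∧ (∀ i : ℤ, ZAdj (p i) (p (i + 1))) ∧ Set.range p = F

/-- `F` is the vertex set of a self-avoiding cycle in `G`. -/
def IsCycleVtxSet (F : Set (ℤ × ℤ)) : Prop :=
  ∃ n : ℕ, 0 < n ∧ ∃ p : ℤ → ℤ × ℤ,
    (∀ i : ℤ, p (i + n) = p i) ∧
    (∀ i j : ℤ, 0 ≤ i → i < j → j < n → p i ≠ p j) ∧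
    (∀ i : ℤ, ZAdj (p i) (p (i + 1))) ∧ Set.range p = F

/-! ### Measures, translations and symmetries -/

/-- Translation of configurations by `t ∈ ℤ²`. -/
def shift (t : ℤ × ℤ) (ω : Config) : Config := fun v => ω (v.1 - t.1, v.2 - t.2)

/-- The involution `θ` exchanging the states `0` and `1`. -/
def flipConf (ω : Config) : Config := fun v => !(ω v)

/-- The primal contour configuration (the marginal on `E(ℒ₁)`). -/
def primalOf (ω : Config) : BEdge → Bool := fun e => if IsPrimalEdge e then contourCfg ω e else false

/-- The dual contour configuration (the marginal on `E(ℒ₂)`). -/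
def dualOf (ω : Config) : BEdge → Bool := fun e => if IsDualEdge e then contourCfg ω e else false

/-- The four boundary edges of the face `S` of `ℒ₁` indexed by the parameters
`(p, q)` (`p`, `q` odd) of the `ℒ₂`-vertex at its centre. -/
def faceEdgesL1 (p q : ℤ) : Set BEdge :=
  {((p - 1, q + 1), true), ((p - 1, q - 1), true), ((p - 2, q), false), ((p, q), false)}

/-- Switch the states of the four boundary edges of a face of `ℒ₁`. -/
def switchFace (p q : ℤ) (φ : BEdge → Bool) : BEdge → Bool :=
  fun e => if e ∈ faceEdgesL1 p q then !(φ e) else φ e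

/-- (A1): invariance under the subgroup of `ℤ²` generated by `(1,1)` and `(1,-1)`,
i.e. under every translation `t` with `t.1 + t.2` even. -/
def SatisfiesA1 (μ : Measure Config) : Prop :=
  ∀ t : ℤ × ℤ, Even (t.1 + t.2) → Measure.map (shift t) μ = μ

/-- (A2): `2ℤ × 2ℤ`-ergodicity. -/
def SatisfiesA2 (μ : Measure Config) : Prop :=
  ∀ A : Set Config, MeasurableSet A →
    (∀ t : ℤ × ℤ, shift (2 * t.1, 2 * t.2) ⁻¹' A = A) → μ A = 0 ∨ μ A = 1

/-- (A3): symmetry under exchanging `0` and `1`. -/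
def SatisfiesA3 (μ : Measure Config) : Prop := Measure.map flipConf μ = μ

/-- (Ak1): invariance under `2kℤ × 2kℤ`-translations. -/
def SatisfiesAk1 (k : ℕ) (μ : Measure Config) : Prop :=
  ∀ t : ℤ × ℤ, Measure.map (shift (2 * (k : ℤ) * t.1, 2 * (k : ℤ) * t.2)) μ = μ

/-- (Ak2): `2kℤ × 2kℤ`-ergodicity. -/
def SatisfiesAk2 (k : ℕ) (μ : Measure Config) : Prop :=
  ∀ A : Set Config, MeasurableSet A →
    (∀ t : ℤ × ℤ, shift (2 * (k : ℤ) * t.1, 2 * (k : ℤ) * t.2) ⁻¹' A = A) →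
      μ A = 0 ∨ μ A = 1

/-- (A4): finite energy of the primal contour marginal `ν₁ = primalOf_* μ`:
switching the four sides of a face of `ℒ₁` preserves positivity of probabilities. -/
def SatisfiesA4 (μ : Measure Config) : Prop :=
  ∀ p q : ℤ, Odd p → Odd q → ∀ E : Set (BEdge → Bool), MeasurableSet E →
    0 < Measure.map primalOf μ E → 0 < Measure.map primalOf μ (switchFace p q '' E)

/-! ### The induced site configuration on `V(ℒ₁)` (for assumption (A5)).
Vertices of `ℒ₁` are indexed by `(a, b) ∈ ℤ²` (the vertex `(2a - 1/2, 2b + 1/2)`);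
the base vertex `v₀` has index `(0, 0)`. -/

/-- Parity (as a `Bool`) of the number of `i` between `0` and `j` with `f i = true`. -/
def rangeParity (f : ℤ → Bool) (j : ℤ) : Bool :=
  if 0 ≤ j then decide (Odd (((Finset.Ico (0 : ℤ) j).filter fun i => f i = true).card))
  else decide (Odd (((Finset.Ico j (0 : ℤ)).filter fun i => f i = true).card))

/-- The site configuration on `V(ℒ₁)` induced by a dual contour configuration `ψ`
and the state `b₀` at the base vertex: states flip exactly across present dual edges. -/
def inducedSite (b₀ : Bool) (ψ : BEdge → Bool) : Config :=
  fun v => Bool.xor b₀ (Bool.xor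
    (rangeParity (fun i => ψ ((2 * i, 0), false)) v.1)
    (rangeParity (fun l => ψ ((2 * v.1 - 1, 2 * l + 1), true)) v.2))

/-- The law `λ₁` on `{0,1}^{V(ℒ₁)}` induced by the dual contour marginal of `μ`
together with a fair coin for the state of the base vertex. -/
def lam1 (μ : Measure Config) : Measure Config :=
  (1 / 2 : ℝ≥0∞) • Measure.map (fun ω => inducedSite true (dualOf ω)) μ +
    (1 / 2 : ℝ≥0∞) • Measure.map (fun ω => inducedSite false (dualOf ω)) μ

/-- (A5): `λ₁` is `2ℤ × 2ℤ`-ergodic (translations of the plane by `2ℤ × 2ℤ` act on the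
index set of `V(ℒ₁)` as all of `ℤ × ℤ`). -/
def SatisfiesA5 (μ : Measure Config) : Prop :=
  ∀ A : Set Config, MeasurableSet A → (∀ t : ℤ × ℤ, shift t ⁻¹' A = A) →
    lam1 μ A = 0 ∨ lam1 μ A = 1

/-! ### `ℒ₁`-edges indexed by `ℒ₁`-vertex coordinates; boxes of `ℒ₂`-faces. -/

/-- The horizontal edge of `ℒ₁` joining the `ℒ₁`-vertices indexed `(a, b)` and `(a+1, b)`. -/
def hEdge (a b : ℤ) : BEdge := ((2 * a, 2 * b), true)

/-- The vertical edge of `ℒ₁` joining the `ℒ₁`-vertices indexed `(a, b)` and `(a, b+1)`. -/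
def vEdge (a b : ℤ) : BEdge := ((2 * a - 1, 2 * b + 1), false)

/-- Membership in `Φ₁`: a bond configuration of `ℒ₁` in which every vertex of `ℒ₁`
has an even number of incident present edges. -/
def MemPhi1 (φ : BEdge → Bool) : Prop :=
  (∀ e, φ e = true → IsPrimalEdge e) ∧
    ∀ a b : ℤ,
      Even ((if φ (hEdge (a - 1) b) then 1 else 0) + (if φ (hEdge a b) then 1 else 0) +
        (if φ (vEdge a (b - 1)) then 1 else 0) + (if φ (vEdge a b) then 1 else 0) : ℕ)

/-- The edges of `ℒ₁` crossing the boundary of the `M × N` box of faces of `ℒ₂`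
whose lower-left face contains the `ℒ₁`-vertex indexed `(a₀, b₀)`. -/
def crossEdges (a₀ b₀ : ℤ) (M N : ℕ) : Finset BEdge :=
  ((Finset.Ico b₀ (b₀ + (N : ℤ))).image fun b => hEdge (a₀ - 1) b) ∪
  ((Finset.Ico b₀ (b₀ + (N : ℤ))).image fun b => hEdge (a₀ + (M : ℤ) - 1) b) ∪
  ((Finset.Ico a₀ (a₀ + (M : ℤ))).image fun a => vEdge a (b₀ - 1)) ∪
  ((Finset.Ico a₀ (a₀ + (M : ℤ))).image fun a => vEdge a (b₀ + (N : ℤ) - 1))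

/-- The `ℒ₁`-vertex indexed `(a, b)` lies strictly inside the box. -/
def insideBox (a₀ b₀ : ℤ) (M N : ℕ) (a b : ℤ) : Prop :=
  a₀ ≤ a ∧ a < a₀ + (M : ℤ) ∧ b₀ ≤ b ∧ b < b₀ + (N : ℤ)

/-- The edges of `ℒ₁` strictly enclosed by the boundary of the box (both endpoints
strictly inside): the subgraph `B_{M-1,N-1}`. -/
def interiorEdges (a₀ b₀ : ℤ) (M N : ℕ) : Set BEdge :=
  {e | (∃ a b : ℤ, e = hEdge a b ∧ insideBox a₀ b₀ M N a b ∧ insideBox a₀ b₀ M N (a + 1) b) ∨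
       (∃ a b : ℤ, e = vEdge a b ∧ insideBox a₀ b₀ M N a b ∧ insideBox a₀ b₀ M N a (b + 1))}

/-! ### Contours of an unconstrained site configuration on `V(ℒ₂)`.
Vertices of `ℒ₂` are indexed by `(c, d) ∈ ℤ²` (the vertex `(2c + 1/2, 2d + 3/2)`);
adjacency of `ℒ₂`-vertices is `ZAdj` on indices. -/

/-- The contour configuration `ψ₁(ρ)` on `ℒ₁` of a site configuration `ρ` on `V(ℒ₂)`:
an edge of `ℒ₁` is present iff the two `ℒ₂`-vertices at distance `1` from it have
different states. -/
def psi1 (ρ : Config) (e : BEdge) : Bool :=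
  if e.2 then
    if Even e.1.1 ∧ Even e.1.2 then
      ρ (e.1.1 / 2, e.1.2 / 2) != ρ (e.1.1 / 2, e.1.2 / 2 - 1)
    else false
  else
    if Odd e.1.1 ∧ Odd e.1.2 then
      ρ ((e.1.1 + 1) / 2 - 1, (e.1.2 - 1) / 2) != ρ ((e.1.1 + 1) / 2, (e.1.2 - 1) / 2)
    else false

/-- The (indices of the) two `ℒ₂`-vertices at Euclidean distance `1` from an `ℒ₁`-edge. -/
def sepVerts (e : BEdge) : Set (ℤ × ℤ) :=
  if e.2 then {(e.1.1 / 2, e.1.2 / 2), (e.1.1 / 2, e.1.2 / 2 - 1)}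
  else {((e.1.1 + 1) / 2 - 1, (e.1.2 - 1) / 2), ((e.1.1 + 1) / 2, (e.1.2 - 1) / 2)}

/-- A contour `C ⊆ E(ℒ₁)` is incident to a set `D` of `ℒ₂`-vertices (Euclidean
distance `1`). -/
def ContourIncL2Cluster (C : Set BEdge) (D : Set (ℤ × ℤ)) : Prop :=
  ∃ e ∈ C, ∃ v ∈ sepVerts e, v ∈ D

/-! ### Auxiliary material for the proof of `lattice_path_in_component`. -/

/-- The planar set realized by a set of contour edges. -/
def SU (R : Set BEdge) : Set Plane := ⋃ e ∈ R, segOf e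

/-- `w` is a lattice point at `ℓ∞`-distance at most `1/2` from `p`. -/
def Near (p : Plane) (w : ℤ × ℤ) : Prop :=
  |p.1 - (w.1 : ℝ)| ≤ 1 / 2 ∧ |p.2 - (w.2 : ℝ)| ≤ 1 / 2

/-- One allowed step: a lattice edge whose closed segment avoids `SU R`. -/
def St (R : Set BEdge) (a b : ℤ × ℤ) : Prop :=
  ZAdj a b ∧ ∀ q ∈ segment ℝ (vtxPt a) (vtxPt b), q ∉ SU R

lemma mem_seg_h {y c₁ c₂ : ℝ} (h : c₁ < c₂) {q : Plane} :
    q ∈ segment ℝ ((c₁, y) : Plane) ((c₂, y) : Plane) ↔ c₁ ≤ q.1 ∧ q.1 ≤ c₂ ∧ q.2 = y := by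
  constructor
  · rintro ⟨a, b, ha, hb, hab, rfl⟩
    simp only [Prod.smul_mk, smul_eq_mul, Prod.mk_add_mk]
    have ha' : a = 1 - b := by linarith
    have e1 : a * c₁ + b * c₂ = c₁ + b * (c₂ - c₁) := by rw [ha']; ring
    have e2 : a * c₁ + b * c₂ = c₂ - a * (c₂ - c₁) := by rw [ha']; ring
    refine ⟨by rw [e1]; nlinarith [mul_nonneg hb (sub_nonneg.2 h.le)],
      by rw [e2]; nlinarith [mul_nonneg ha (sub_nonneg.2 h.le)],
      by rw [← add_mul, hab, one_mul]⟩
  · rintro ⟨h₁, h₂, h₃⟩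
    have hd : c₂ - c₁ ≠ 0 := by linarith
    refine ⟨(c₂ - q.1)/(c₂ - c₁), (q.1 - c₁)/(c₂ - c₁),
      div_nonneg (by linarith) (by linarith),
      div_nonneg (by linarith) (by linarith), by field_simp; ring, ?_⟩
    have hq : q = (q.1, q.2) := rfl
    rw [hq]
    simp only [Prod.smul_mk, smul_eq_mul, Prod.mk_add_mk, Prod.mk.injEq]
    constructor
    · field_simp; ring
    · rw [h₃]; field_simp; ring

lemma mem_seg_v {c y₁ y₂ : ℝ} (h : y₁ < y₂) {q : Plane} :
    q ∈ segment ℝ ((c, y₁) : Plane) ((c, y₂) : Plane) ↔ y₁ ≤ q.2 ∧ q.2 ≤ y₂ ∧ q.1 = c := by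
  constructor
  · rintro ⟨a, b, ha, hb, hab, rfl⟩
    simp only [Prod.smul_mk, smul_eq_mul, Prod.mk_add_mk]
    have ha' : a = 1 - b := by linarith
    have e1 : a * y₁ + b * y₂ = y₁ + b * (y₂ - y₁) := by rw [ha']; ring
    have e2 : a * y₁ + b * y₂ = y₂ - a * (y₂ - y₁) := by rw [ha']; ring
    refine ⟨by rw [e1]; nlinarith [mul_nonneg hb (sub_nonneg.2 h.le)],
      by rw [e2]; nlinarith [mul_nonneg ha (sub_nonneg.2 h.le)],
      by rw [← add_mul, hab, one_mul]⟩
  · rintro ⟨h₁, h₂, h₃⟩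
    have hd : y₂ - y₁ ≠ 0 := by linarith
    refine ⟨(y₂ - q.2)/(y₂ - y₁), (q.2 - y₁)/(y₂ - y₁),
      div_nonneg (by linarith) (by linarith),
      div_nonneg (by linarith) (by linarith), by field_simp; ring, ?_⟩
    have hq : q = (q.1, q.2) := rfl
    rw [hq]
    simp only [Prod.smul_mk, smul_eq_mul, Prod.mk_add_mk, Prod.mk.injEq]
    constructor
    · rw [h₃]; field_simp; ring
    · field_simp; ring

lemma isClosed_segment_plane (u v : Plane) : IsClosed (segment ℝ u v) := by
  rw [segment_eq_image]
  exact (isCompact_Icc.image (by continuity)).isClosed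

lemma mem_segOf_h {a b : ℤ} {q : Plane} :
    q ∈ segOf ((a, b), true) ↔
      q.2 = (b : ℝ) + 1 / 2 ∧ (a : ℝ) - 1 / 2 ≤ q.1 ∧ q.1 ≤ (a : ℝ) + 3 / 2 := by
  have h1 : ptOfDoubled (edgeEnds ((a, b), true)).1 =
      (((a : ℝ) - 1 / 2, (b : ℝ) + 1 / 2) : Plane) := by
    simp only [edgeEnds, if_pos, ptOfDoubled]
    rw [Prod.mk.injEq]; constructor <;> (push_cast; ring)
  have h2 : ptOfDoubled (edgeEnds ((a, b), true)).2 =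
      (((a : ℝ) + 3 / 2, (b : ℝ) + 1 / 2) : Plane) := by
    simp only [edgeEnds, if_pos, ptOfDoubled]
    rw [Prod.mk.injEq]; constructor <;> (push_cast; ring)
  rw [segOf, h1, h2, mem_seg_h (by linarith)]
  tauto

lemma mem_segOf_v {a b : ℤ} {q : Plane} :
    q ∈ segOf ((a, b), false) ↔
      q.1 = (a : ℝ) + 1 / 2 ∧ (b : ℝ) - 1 / 2 ≤ q.2 ∧ q.2 ≤ (b : ℝ) + 3 / 2 := by
  have h1 : ptOfDoubled (edgeEnds ((a, b), false)).1 =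
      (((a : ℝ) + 1 / 2, (b : ℝ) - 1 / 2) : Plane) := by
    simp only [edgeEnds, if_neg, ptOfDoubled, Bool.false_eq_true, not_false_iff]
    rw [Prod.mk.injEq]; constructor <;> (push_cast; ring)
  have h2 : ptOfDoubled (edgeEnds ((a, b), false)).2 =
      (((a : ℝ) + 1 / 2, (b : ℝ) + 3 / 2) : Plane) := by
    simp only [edgeEnds, if_neg, ptOfDoubled, Bool.false_eq_true, not_false_iff]
    rw [Prod.mk.injEq]; constructor <;> (push_cast; ring)
  rw [segOf, h1, h2, mem_seg_v (by linarith)]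
  tauto

lemma segOf_bounds {a b : ℤ} {d : Bool} {q : Plane} (hq : q ∈ segOf ((a, b), d)) :
    (a : ℝ) - 1 / 2 ≤ q.1 ∧ q.1 ≤ (a : ℝ) + 3 / 2 ∧
    (b : ℝ) - 1 / 2 ≤ q.2 ∧ q.2 ≤ (b : ℝ) + 3 / 2 := by
  cases d
  · rw [mem_segOf_v] at hq
    refine ⟨by linarith [hq.1.ge, hq.1.le], by linarith [hq.1.le], hq.2.1, hq.2.2⟩
  · rw [mem_segOf_h] at hq
    refine ⟨hq.2.1, hq.2.2, by linarith [hq.1.le], by linarith [hq.1.le]⟩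

lemma vtxPt_eq (m n : ℤ) : vtxPt (m, n) = (((m : ℝ), (n : ℝ)) : Plane) := rfl

/-- Key geometric fact (horizontal lattice edge): if a point `q` of the closed lattice
edge from `(m,n)` to `(m+1,n)` lies on the contour segment of `e`, then so does the
point `(m + 1/2, t)` for any `t` with `|t - n| ≤ 1/2`. -/
lemma cross_h {m n : ℤ} {t : ℝ} (ht : |t - (n : ℝ)| ≤ 1 / 2) {e : BEdge} {q : Plane}
    (hq : q ∈ segment ℝ (vtxPt (m, n)) (vtxPt (m + 1, n)))
    (he : q ∈ segOf e) : (((m : ℝ) + 1 / 2, t) : Plane) ∈ segOf e := by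
  rw [abs_le] at ht
  obtain ⟨⟨a, b⟩, d⟩ := e
  have hv2 : vtxPt (m + 1, n) = ((((m : ℝ) + 1), (n : ℝ)) : Plane) := by
    rw [vtxPt_eq]; rw [Prod.mk.injEq]; constructor <;> (push_cast; ring)
  rw [vtxPt_eq, hv2, mem_seg_h (by linarith)] at hq
  obtain ⟨hq1, hq2, hq3⟩ := hq
  cases d
  · rw [mem_segOf_v] at he ⊢
    obtain ⟨he1, he2, he3⟩ := he
    have ham : (2 * m : ℝ) ≤ 2 * a + 1 := by rw [he1] at hq1; linarith
    have ham' : (2 * a + 1 : ℝ) ≤ 2 * m + 2 := by rw [he1] at hq2; linarith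
    have ha : a = m := by
      have h1 : (2 * m : ℤ) ≤ 2 * a + 1 := by exact_mod_cast ham
      have h2 : (2 * a + 1 : ℤ) ≤ 2 * m + 2 := by exact_mod_cast ham'
      omega
    have hbn : (2 * b - 1 : ℝ) ≤ 2 * n := by rw [hq3] at he2; linarith
    have hbn' : (2 * n : ℝ) ≤ 2 * b + 3 := by rw [hq3] at he3; linarith
    have hb1 : (b : ℤ) ≤ n := by
      have : (2 * b - 1 : ℤ) ≤ 2 * n := by exact_mod_cast hbn
      omega
    have hb2 : (n : ℤ) ≤ b + 1 := by
      have : (2 * n : ℤ) ≤ 2 * b + 3 := by exact_mod_cast hbn'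
      omega
    have hb1' : (b : ℝ) ≤ (n : ℝ) := by exact_mod_cast hb1
    have hb2' : (n : ℝ) ≤ (b : ℝ) + 1 := by exact_mod_cast hb2
    subst ha
    exact ⟨rfl, by simp only; linarith, by simp only; linarith⟩
  · rw [mem_segOf_h] at he
    exfalso
    have : (2 * n : ℝ) = 2 * b + 1 := by rw [hq3] at he; linarith [he.1]
    have : (2 * n : ℤ) = 2 * b + 1 := by exact_mod_cast this
    omega

/-- Key geometric fact (vertical lattice edge). -/
lemma cross_v {m n : ℤ} {s : ℝ} (hs : |s - (m : ℝ)| ≤ 1 / 2) {e : BEdge} {q : Plane}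
    (hq : q ∈ segment ℝ (vtxPt (m, n)) (vtxPt (m, n + 1)))
    (he : q ∈ segOf e) : ((s, (n : ℝ) + 1 / 2) : Plane) ∈ segOf e := by
  rw [abs_le] at hs
  obtain ⟨⟨a, b⟩, d⟩ := e
  have hv2 : vtxPt (m, n + 1) = (((m : ℝ), ((n : ℝ) + 1)) : Plane) := by
    rw [vtxPt_eq]; rw [Prod.mk.injEq]; constructor <;> (push_cast; ring)
  rw [vtxPt_eq, hv2, mem_seg_v (by linarith)] at hq
  obtain ⟨hq1, hq2, hq3⟩ := hq
  cases d
  · rw [mem_segOf_v] at he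
    exfalso
    have : (2 * m : ℝ) = 2 * a + 1 := by rw [hq3] at he; linarith [he.1]
    have : (2 * m : ℤ) = 2 * a + 1 := by exact_mod_cast this
    omega
  · rw [mem_segOf_h] at he ⊢
    obtain ⟨he1, he2, he3⟩ := he
    have hbn : (2 * n : ℝ) ≤ 2 * b + 1 := by rw [he1] at hq1; linarith
    have hbn' : (2 * b + 1 : ℝ) ≤ 2 * n + 2 := by rw [he1] at hq2; linarith
    have hb : b = n := by
      have h1 : (2 * n : ℤ) ≤ 2 * b + 1 := by exact_mod_cast hbn
      have h2 : (2 * b + 1 : ℤ) ≤ 2 * n + 2 := by exact_mod_cast hbn'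
      omega
    have ham : (2 * a - 1 : ℝ) ≤ 2 * m := by rw [hq3] at he2; linarith
    have ham' : (2 * m : ℝ) ≤ 2 * a + 3 := by rw [hq3] at he3; linarith
    have ha1 : (a : ℤ) ≤ m := by
      have : (2 * a - 1 : ℤ) ≤ 2 * m := by exact_mod_cast ham
      omega
    have ha2 : (m : ℤ) ≤ a + 1 := by
      have : (2 * m : ℤ) ≤ 2 * a + 3 := by exact_mod_cast ham'
      omega
    have ha1' : (a : ℝ) ≤ (m : ℝ) := by exact_mod_cast ha1
    have ha2' : (m : ℝ) ≤ (a : ℝ) + 1 := by exact_mod_cast ha2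
    subst hb
    exact ⟨rfl, by simp only; linarith, by simp only; linarith⟩

lemma zadj_cases {u v : ℤ × ℤ} (h : ZAdj u v) :
    v = (u.1 + 1, u.2) ∨ v = (u.1 - 1, u.2) ∨ v = (u.1, u.2 + 1) ∨ v = (u.1, u.2 - 1) := by
  obtain ⟨u1, u2⟩ := u
  obtain ⟨v1, v2⟩ := v
  simp only [ZAdj] at h
  simp only [Prod.mk.injEq]
  rw [Int.abs_eq_natAbs, Int.abs_eq_natAbs] at h
  omega

lemma notcross_h {R : Set BEdge} {p : Plane} (hp : p ∉ SU R) {m n : ℤ}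
    (h1 : Near p (m, n)) (h2 : Near p (m + 1, n)) :
    ∀ q ∈ segment ℝ (vtxPt (m, n)) (vtxPt (m + 1, n)), q ∉ SU R := by
  intro q hq hqS
  simp only [SU, Set.mem_iUnion] at hqS
  obtain ⟨e, he, heq⟩ := hqS
  have hp1 : p.1 = (m : ℝ) + 1 / 2 := by
    have a1 := h1.1
    have a2 := h2.1
    simp only at a1 a2
    rw [abs_le] at a1 a2
    push_cast at a2
    linarith [a1.1, a1.2, a2.1, a2.2]
  have hmem := cross_h (m := m) (n := n) h1.2 hq heq
  rw [← hp1] at hmem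
  have hpe : p ∈ segOf e := by rw [show p = (p.1, p.2) from rfl]; exact hmem
  exact hp (Set.mem_iUnion₂.2 ⟨e, he, hpe⟩)

lemma notcross_v {R : Set BEdge} {p : Plane} (hp : p ∉ SU R) {m n : ℤ}
    (h1 : Near p (m, n)) (h2 : Near p (m, n + 1)) :
    ∀ q ∈ segment ℝ (vtxPt (m, n)) (vtxPt (m, n + 1)), q ∉ SU R := by
  intro q hq hqS
  simp only [SU, Set.mem_iUnion] at hqS
  obtain ⟨e, he, heq⟩ := hqS
  have hp2 : p.2 = (n : ℝ) + 1 / 2 := by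
    have a1 := h1.2
    have a2 := h2.2
    simp only at a1 a2
    rw [abs_le] at a1 a2
    push_cast at a2
    linarith [a1.1, a1.2, a2.1, a2.2]
  have hmem := cross_v (m := m) (n := n) h1.1 hq heq
  rw [← hp2] at hmem
  have hpe : p ∈ segOf e := by rw [show p = (p.1, p.2) from rfl]; exact hmem
  exact hp (Set.mem_iUnion₂.2 ⟨e, he, hpe⟩)

lemma step_of_near {R : Set BEdge} {p : Plane} (hp : p ∉ SU R) {w₁ w₂ : ℤ × ℤ}
    (h1 : Near p w₁) (h2 : Near p w₂) (hadj : ZAdj w₁ w₂) : St R w₁ w₂ := by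
  refine ⟨hadj, ?_⟩
  rcases zadj_cases hadj with hv | hv | hv | hv <;> subst hv
  · exact notcross_h hp h1 h2
  · intro q hq
    rw [segment_symm] at hq
    have hw1 : vtxPt w₁ = vtxPt (w₁.1 - 1 + 1, w₁.2) := by
      show vtxPt (w₁.1, w₁.2) = _
      norm_num
    rw [hw1] at hq
    exact notcross_h hp h2 (by rw [show (w₁.1 - 1 + 1, w₁.2) = (w₁.1, w₁.2) from by norm_num]; exact h1) q hq
  · exact notcross_v hp h1 h2
  · intro q hq
    rw [segment_symm] at hq
    have hw1 : vtxPt w₁ = vtxPt (w₁.1, w₁.2 - 1 + 1) := by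
      show vtxPt (w₁.1, w₁.2) = _
      norm_num
    rw [hw1] at hq
    exact notcross_v hp h2 (by rw [show (w₁.1, w₁.2 - 1 + 1) = (w₁.1, w₁.2) from by norm_num]; exact h1) q hq

lemma near_connected {R : Set BEdge} {p : Plane} (hp : p ∉ SU R) {w₁ w₂ : ℤ × ℤ}
    (h1 : Near p w₁) (h2 : Near p w₂) : Relation.ReflTransGen (St R) w₁ w₂ := by
  have keyh : ∀ u v : ℤ × ℤ, Near p u → Near p v → u.2 = v.2 →
      Relation.ReflTransGen (St R) u v := by
    intro u v hu hv huv
    have hd : |(u.1 : ℝ) - (v.1 : ℝ)| ≤ 1 := by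
      have a1 := hu.1; have a2 := hv.1
      rw [abs_le] at a1 a2 ⊢
      constructor <;> linarith [a1.1, a1.2, a2.1, a2.2]
    have hd' : |u.1 - v.1| ≤ 1 := by
      have hr : ((|u.1 - v.1| : ℤ) : ℝ) ≤ 1 := by push_cast; exact hd
      exact_mod_cast hr
    rw [Int.abs_eq_natAbs] at hd'
    rcases (by omega : v.1 = u.1 ∨ v.1 = u.1 + 1 ∨ v.1 = u.1 - 1) with h | h | h
    · have : u = v := by rw [Prod.ext_iff]; exact ⟨h.symm, huv⟩
      rw [this]
    · have hadj : ZAdj u v := by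
        show |u.1 - v.1| + |u.2 - v.2| = 1
        rw [h, ← huv]
        have e1 : u.1 - (u.1 + 1) = -1 := by ring
        rw [e1, sub_self, abs_zero, abs_neg, abs_one]
        norm_num
      exact Relation.ReflTransGen.single (step_of_near hp hu hv hadj)
    · have hadj : ZAdj u v := by
        show |u.1 - v.1| + |u.2 - v.2| = 1
        rw [h, ← huv]
        have e1 : u.1 - (u.1 - 1) = 1 := by ring
        rw [e1, sub_self, abs_zero, abs_one]
        norm_num
      exact Relation.ReflTransGen.single (step_of_near hp hu hv hadj)
  have keyv : ∀ u v : ℤ × ℤ, Near p u → Near p v → u.1 = v.1 →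
      Relation.ReflTransGen (St R) u v := by
    intro u v hu hv huv
    have hd : |(u.2 : ℝ) - (v.2 : ℝ)| ≤ 1 := by
      have a1 := hu.2; have a2 := hv.2
      rw [abs_le] at a1 a2 ⊢
      constructor <;> linarith [a1.1, a1.2, a2.1, a2.2]
    have hd' : |u.2 - v.2| ≤ 1 := by
      have hr : ((|u.2 - v.2| : ℤ) : ℝ) ≤ 1 := by push_cast; exact hd
      exact_mod_cast hr
    rw [Int.abs_eq_natAbs] at hd'
    rcases (by omega : v.2 = u.2 ∨ v.2 = u.2 + 1 ∨ v.2 = u.2 - 1) with h | h | h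
    · have : u = v := by rw [Prod.ext_iff]; exact ⟨huv, h.symm⟩
      rw [this]
    · have hadj : ZAdj u v := by
        show |u.1 - v.1| + |u.2 - v.2| = 1
        rw [h, ← huv]
        have e1 : u.2 - (u.2 + 1) = -1 := by ring
        rw [e1, sub_self, abs_zero, abs_neg, abs_one]
        norm_num
      exact Relation.ReflTransGen.single (step_of_near hp hu hv hadj)
    · have hadj : ZAdj u v := by
        show |u.1 - v.1| + |u.2 - v.2| = 1
        rw [h, ← huv]
        have e1 : u.2 - (u.2 - 1) = 1 := by ring
        rw [e1, sub_self, abs_zero, abs_one]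
        norm_num
      exact Relation.ReflTransGen.single (step_of_near hp hu hv hadj)
  have hmid : Near p (w₂.1, w₁.2) := ⟨h2.1, h1.2⟩
  exact (keyh w₁ (w₂.1, w₁.2) h1 hmid rfl).trans (keyv (w₂.1, w₁.2) w₂ hmid h2 rfl)

lemma gap (s : ℝ) : ∃ ε : ℝ, 0 < ε ∧ ∀ s' : ℝ, |s' - s| < ε →
    ∀ k : ℤ, |s' - (k : ℝ)| ≤ 1 / 2 → |s - (k : ℝ)| ≤ 1 / 2 := by
  classical
  set g : ℤ → ℝ := fun k => if |s - (k : ℝ)| ≤ 1 / 2 then 1 else |s - (k : ℝ)| - 1 / 2 with hg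
  set F : Finset ℤ := Finset.Icc (⌊s⌋ - 2) (⌊s⌋ + 2) with hF
  have hFne : F.Nonempty := ⟨⌊s⌋, by rw [hF, Finset.mem_Icc]; omega⟩
  set ε : ℝ := min 1 (F.inf' hFne g) with hε
  have hgpos : ∀ k ∈ F, 0 < g k := by
    intro k _
    by_cases h : |s - (k : ℝ)| ≤ 1 / 2
    · simp only [hg, if_pos h]
      norm_num
    · simp only [hg, if_neg h]
      push_neg at h
      linarith
  have hεpos : 0 < ε := lt_min one_pos ((Finset.lt_inf'_iff hFne).2 hgpos)
  refine ⟨ε, hεpos, ?_⟩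
  intro s' hs' k hk
  by_contra hcon
  push_neg at hcon
  have hε1 : ε ≤ 1 := min_le_left _ _
  have h1 : |s - (k : ℝ)| ≤ |s - s'| + |s' - (k : ℝ)| := abs_sub_le s s' (k : ℝ)
  have h2 : |s - s'| = |s' - s| := abs_sub_comm s s'
  have hlt : |s - (k : ℝ)| < ε + 1 / 2 := by rw [h2] at h1; linarith
  have hfl : (⌊s⌋ : ℝ) ≤ s := Int.floor_le s
  have hfl2 : s < (⌊s⌋ : ℝ) + 1 := Int.lt_floor_add_one s
  have habs := abs_lt.1 hlt
  have hk1 : (k : ℝ) < (⌊s⌋ : ℝ) + 3 := by linarith [habs.1]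
  have hk2 : ((⌊s⌋ : ℝ)) - 3 < (k : ℝ) := by linarith [habs.2]
  have hkF : k ∈ F := by
    rw [hF, Finset.mem_Icc]
    constructor
    · have : (⌊s⌋ : ℝ) - 3 < (k : ℝ) := hk2
      have h' : (⌊s⌋ - 3 : ℤ) < k := by exact_mod_cast (by push_cast; linarith : ((⌊s⌋ - 3 : ℤ) : ℝ) < (k : ℝ))
      omega
    · have h' : (k : ℤ) < ⌊s⌋ + 3 := by exact_mod_cast (by push_cast; linarith : ((k : ℤ) : ℝ) < ((⌊s⌋ + 3 : ℤ) : ℝ))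
      omega
  have hεg : ε ≤ g k := le_trans (min_le_right _ _) (Finset.inf'_le g hkF)
  have hgk : g k = |s - (k : ℝ)| - 1 / 2 := if_neg (not_le.2 hcon)
  rw [hgk] at hεg
  linarith

lemma su_local {R : Set BEdge} {p : Plane} (hp : p ∉ SU R) :
    ∃ ε : ℝ, 0 < ε ∧ ∀ q : Plane, dist q p < ε → q ∉ SU R := by
  classical
  set g : BEdge → ℝ := fun e => if p ∈ segOf e then 1 else min 1 (Metric.infDist p (segOf e))
    with hg
  set Fs : Finset BEdge :=
    ((Finset.Icc (⌊p.1⌋ - 4) (⌊p.1⌋ + 4)) ×ˢ (Finset.Icc (⌊p.2⌋ - 4) (⌊p.2⌋ + 4))) ×ˢ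
      (Finset.univ : Finset Bool) with hFs
  have hmem : ∀ e : BEdge, e ∈ Fs ↔
      (⌊p.1⌋ - 4 ≤ e.1.1 ∧ e.1.1 ≤ ⌊p.1⌋ + 4) ∧ (⌊p.2⌋ - 4 ≤ e.1.2 ∧ e.1.2 ≤ ⌊p.2⌋ + 4) := by
    intro e
    rw [hFs, Finset.mem_product, Finset.mem_product, Finset.mem_Icc, Finset.mem_Icc]
    simp
  have hFne : Fs.Nonempty := ⟨((⌊p.1⌋, ⌊p.2⌋), true), by simp [hmem]⟩
  set ε : ℝ := Fs.inf' hFne g with hε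
  have hgpos : ∀ e ∈ Fs, 0 < g e := by
    intro e _
    by_cases h : p ∈ segOf e
    · simp [hg, h]
    · simp only [hg, if_neg h]
      refine lt_min one_pos ?_
      exact (IsClosed.notMem_iff_infDist_pos (isClosed_segment_plane _ _)
        ⟨_, left_mem_segment ℝ _ _⟩).1 h
  have hεpos : 0 < ε := (Finset.lt_inf'_iff hFne).2 hgpos
  have hε1 : ε ≤ 1 := by
    refine le_trans (Finset.inf'_le g hFne.choose_spec) ?_
    by_cases h : p ∈ segOf hFne.choose
    · simp [hg, h]
    · simp only [hg, if_neg h]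
      exact min_le_left _ _
  refine ⟨ε, hεpos, ?_⟩
  intro q hq hqS
  simp only [SU, Set.mem_iUnion] at hqS
  obtain ⟨e, he, heq⟩ := hqS
  have hd1 : dist q.1 p.1 ≤ dist q p := by rw [Prod.dist_eq]; exact le_max_left _ _
  have hd2 : dist q.2 p.2 ≤ dist q p := by rw [Prod.dist_eq]; exact le_max_right _ _
  rw [Real.dist_eq] at hd1 hd2
  by_cases heF : e ∈ Fs
  · have hpe : p ∉ segOf e := fun hin => hp (Set.mem_iUnion₂.2 ⟨e, he, hin⟩)
    have h1 : ε ≤ g e := Finset.inf'_le g heF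
    rw [hg] at h1
    simp only [if_neg hpe] at h1
    have h2 : ε ≤ Metric.infDist p (segOf e) := le_trans h1 (min_le_right _ _)
    have h3 : Metric.infDist p (segOf e) ≤ dist p q := Metric.infDist_le_dist_of_mem heq
    rw [dist_comm] at h3
    linarith
  · obtain ⟨⟨a, b⟩, d⟩ := e
    obtain ⟨hb1, hb2, hb3, hb4⟩ := segOf_bounds heq
    have habs1 := abs_lt.1 (lt_of_le_of_lt hd1 (lt_of_lt_of_le hq hε1))
    have habs2 := abs_lt.1 (lt_of_le_of_lt hd2 (lt_of_lt_of_le hq hε1))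
    have hfl1 : (⌊p.1⌋ : ℝ) ≤ p.1 := Int.floor_le p.1
    have hfl1' : p.1 < (⌊p.1⌋ : ℝ) + 1 := Int.lt_floor_add_one p.1
    have hfl2 : (⌊p.2⌋ : ℝ) ≤ p.2 := Int.floor_le p.2
    have hfl2' : p.2 < (⌊p.2⌋ : ℝ) + 1 := Int.lt_floor_add_one p.2
    refine heF ((hmem _).2 ⟨⟨?_, ?_⟩, ?_, ?_⟩) <;> simp only
    · have : ((⌊p.1⌋ - 4 : ℤ) : ℝ) < (a : ℝ) := by push_cast; linarith
      have := (by exact_mod_cast this : (⌊p.1⌋ - 4 : ℤ) < a)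
      omega
    · have : ((a : ℤ) : ℝ) < ((⌊p.1⌋ + 4 : ℤ) : ℝ) := by push_cast; linarith
      have := (by exact_mod_cast this : (a : ℤ) < ⌊p.1⌋ + 4)
      omega
    · have : ((⌊p.2⌋ - 4 : ℤ) : ℝ) < (b : ℝ) := by push_cast; linarith
      have := (by exact_mod_cast this : (⌊p.2⌋ - 4 : ℤ) < b)
      omega
    · have : ((b : ℤ) : ℝ) < ((⌊p.2⌋ + 4 : ℤ) : ℝ) := by push_cast; linarith
      have := (by exact_mod_cast this : (b : ℤ) < ⌊p.2⌋ + 4)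
      omega

lemma near_self (v : ℤ × ℤ) : Near (vtxPt v) v := by
  constructor <;> simp [vtxPt]

lemma near_round (p : Plane) : ∃ w : ℤ × ℤ, Near p w :=
  ⟨(round p.1, round p.2), abs_sub_round p.1, abs_sub_round p.2⟩

lemma local_good {R : Set BEdge} {p : Plane} (hp : p ∉ SU R) :
    ∃ ε : ℝ, 0 < ε ∧ ∀ q : Plane, dist q p < ε →
      q ∉ SU R ∧ ∀ w : ℤ × ℤ, Near q w → Near p w := by
  obtain ⟨ε₁, h1, hs1⟩ := su_local hp
  obtain ⟨ε₂, h2, hs2⟩ := gap p.1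
  obtain ⟨ε₃, h3, hs3⟩ := gap p.2
  refine ⟨min ε₁ (min ε₂ ε₃), by positivity, ?_⟩
  intro q hq
  have hd1 : dist q.1 p.1 ≤ dist q p := by rw [Prod.dist_eq]; exact le_max_left _ _
  have hd2 : dist q.2 p.2 ≤ dist q p := by rw [Prod.dist_eq]; exact le_max_right _ _
  rw [Real.dist_eq] at hd1 hd2
  refine ⟨hs1 q (lt_of_lt_of_le hq (min_le_left _ _)), fun w hw => ?_⟩
  constructor
  · exact hs2 q.1 (by linarith [lt_of_lt_of_le hq (le_trans (min_le_right _ _) (min_le_left _ _))]) w.1 hw.1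
  · exact hs3 q.2 (by linarith [lt_of_lt_of_le hq (le_trans (min_le_right _ _) (min_le_right _ _))]) w.2 hw.2

lemma component_discrete {R : Set BEdge} {x y : ℤ × ℤ} (hx : vtxPt x ∉ SU R)
    (hy : vtxPt y ∈ connectedComponentIn (SU R)ᶜ (vtxPt x)) :
    Relation.ReflTransGen (St R) x y := by
  classical
  set V : Set Plane :=
    {p | p ∉ SU R ∧ ∃ w : ℤ × ℤ, Near p w ∧ Relation.ReflTransGen (St R) x w} with hV
  set W : Set Plane :=
    {p | p ∉ SU R ∧ ∃ w : ℤ × ℤ, Near p w ∧ ¬ Relation.ReflTransGen (St R) x w} with hW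
  have hVopen : IsOpen V := by
    rw [Metric.isOpen_iff]
    rintro p ⟨hpS, w, hw, hgw⟩
    obtain ⟨ε, hε, hloc⟩ := local_good hpS
    refine ⟨ε, hε, fun q hq => ?_⟩
    rw [Metric.mem_ball] at hq
    obtain ⟨hqS, hnear⟩ := hloc q hq
    obtain ⟨w', hw'⟩ := near_round q
    exact ⟨hqS, w', hw', hgw.trans (near_connected hpS hw (hnear w' hw'))⟩
  have hWopen : IsOpen W := by
    rw [Metric.isOpen_iff]
    rintro p ⟨hpS, w, hw, hgw⟩
    obtain ⟨ε, hε, hloc⟩ := local_good hpS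
    refine ⟨ε, hε, fun q hq => ?_⟩
    rw [Metric.mem_ball] at hq
    obtain ⟨hqS, hnear⟩ := hloc q hq
    obtain ⟨w', hw'⟩ := near_round q
    exact ⟨hqS, w', hw', fun hgw' => hgw (hgw'.trans (near_connected hpS (hnear w' hw') hw))⟩
  by_contra hcon
  have hyS : vtxPt y ∉ SU R := connectedComponentIn_subset _ _ hy
  have hxV : vtxPt x ∈ V := ⟨hx, x, near_self x, Relation.ReflTransGen.refl⟩
  have hyW : vtxPt y ∈ W := ⟨hyS, y, near_self y, hcon⟩
  have hsub : connectedComponentIn (SU R)ᶜ (vtxPt x) ⊆ V ∪ W := by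
    intro p hp
    have hpS : p ∉ SU R := connectedComponentIn_subset _ _ hp
    obtain ⟨w, hw⟩ := near_round p
    by_cases h : Relation.ReflTransGen (St R) x w
    · exact Or.inl ⟨hpS, w, hw, h⟩
    · exact Or.inr ⟨hpS, w, hw, h⟩
  have hpre : IsPreconnected (connectedComponentIn (SU R)ᶜ (vtxPt x)) :=
    isPreconnected_connectedComponentIn
  obtain ⟨z, hz1, hz2, hz3⟩ := hpre V W hVopen hWopen hsub
    ⟨vtxPt x, mem_connectedComponentIn hx, hxV⟩ ⟨vtxPt y, hy, hyW⟩
  obtain ⟨hzS, w, hw, hgw⟩ := hz2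
  obtain ⟨-, w', hw', hbw'⟩ := hz3
  exact hbw' (hgw.trans (near_connected hzS hw hw'))

lemma path_extract {R : Set BEdge} {x : ℤ × ℤ} (hx : vtxPt x ∉ SU R) :
    ∀ y : ℤ × ℤ, Relation.ReflTransGen (St R) x y →
      vtxPt y ∈ connectedComponentIn (SU R)ᶜ (vtxPt x) ∧
      ∃ n : ℕ, ∃ p : ℕ → ℤ × ℤ, p 0 = x ∧ p n = y ∧
        ∀ i : ℕ, i < n → ZAdj (p i) (p (i + 1)) ∧
          segment ℝ (vtxPt (p i)) (vtxPt (p (i + 1))) ⊆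
            connectedComponentIn (SU R)ᶜ (vtxPt x) := by
  intro y h
  induction h with
  | refl =>
      exact ⟨mem_connectedComponentIn hx, 0, fun _ => x, rfl, rfl,
        fun i hi => absurd hi (by omega)⟩
  | @tail b c hab hbc ih =>
      obtain ⟨hbcomp, n, p, hp0, hpn, hstep⟩ := ih
      have hsub : segment ℝ (vtxPt b) (vtxPt c) ⊆ (SU R)ᶜ := fun q hq => hbc.2 q hq
      have hconn : IsPreconnected (segment ℝ (vtxPt b) (vtxPt c)) :=
        (convex_segment _ _).isPreconnected
      have hsegcomp : segment ℝ (vtxPt b) (vtxPt c) ⊆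
          connectedComponentIn (SU R)ᶜ (vtxPt x) := by
        rw [connectedComponentIn_eq hbcomp]
        exact hconn.subset_connectedComponentIn (left_mem_segment ℝ _ _) hsub
      have hccomp : vtxPt c ∈ connectedComponentIn (SU R)ᶜ (vtxPt x) :=
        hsegcomp (right_mem_segment ℝ _ _)
      refine ⟨hccomp, n + 1, fun k => if k = n + 1 then c else p k, ?_, ?_, ?_⟩
      · dsimp only
        rw [if_neg (by omega), hp0]
      · dsimp only
        rw [if_pos rfl]
      · intro i hi
        dsimp only
        by_cases hin : i < n
        · rw [if_neg (by omega), if_neg (by omega)]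
          exact hstep i hin
        · have hieq : i = n := by omega
          subst hieq
          rw [if_neg (by omega), if_pos rfl, hpn]
          exact ⟨hbc.1, hsegcomp⟩

/-- Lemma 2.4 of the paper: two vertices of `ℤ²` lying in the same
connected component of the complement of a nonempty collection of contours are joined
by a lattice path staying in that component. -/
theorem lattice_path_in_component
    (ω : Config) (hω : Constrained ω) (𝒞 : Set (Set BEdge))
    (h𝒞 : ∀ C ∈ 𝒞, IsContour ω C) (hne : 𝒞.Nonempty)
    (x y : ℤ × ℤ)
    (hx : vtxPt x ∈ (⋃ C ∈ 𝒞, contourSet C)ᶜ)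
    (hy : vtxPt y ∈ connectedComponentIn (⋃ C ∈ 𝒞, contourSet C)ᶜ (vtxPt x)) :
    ∃ n : ℕ, ∃ p : Fin (n + 1) → ℤ × ℤ, p 0 = x ∧ p (Fin.last n) = y ∧
      ∀ i : Fin n, ZAdj (p i.castSucc) (p i.succ) ∧
        segment ℝ (vtxPt (p i.castSucc)) (vtxPt (p i.succ)) ⊆
          connectedComponentIn (⋃ C ∈ 𝒞, contourSet C)ᶜ (vtxPt x) := by
  classical
  set R : Set BEdge := {e | ∃ C ∈ 𝒞, e ∈ C} with hR
  have hSU : (⋃ C ∈ 𝒞, contourSet C) = SU R := by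
    ext q
    simp only [SU, contourSet, Set.mem_iUnion, hR, Set.mem_setOf_eq]
    constructor
    · rintro ⟨C, hC, e, he, hq⟩
      exact ⟨e, ⟨C, hC, he⟩, hq⟩
    · rintro ⟨e, ⟨C, hC, he⟩, hq⟩
      exact ⟨C, hC, e, he, hq⟩
  rw [hSU] at hx hy ⊢
  have hx' : vtxPt x ∉ SU R := hx
  have hgood : Relation.ReflTransGen (St R) x y := component_discrete hx' hy
  obtain ⟨-, n, p, hp0, hpn, hstep⟩ := path_extract hx' y hgood
  exact ⟨n, fun i => p i.val, hp0, hpn, fun i => hstep i.val i.isLt⟩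

end CP

end
end

section
/- Let ω ∈ Ω. If C₁ and C₂ are two distinct infinite contours of φ(ω), then there exists an infinite cluster of ω that is incident to C₁. In particular, if φ(ω) has at least two infinite contours, then ω has an infinite 0-cluster or an infinite 1-cluster. -/
open scoped Classical ENNReal
open MeasureTheory

noncomputable section

namespace CP

/-! ### Auxiliary machinery for Statement 7 -/

namespace S7

open Relation

lemma zadj_iff {u v : ℤ × ℤ} : ZAdj u v ↔
    (v.1 = u.1 + 1 ∧ v.2 = u.2) ∨ (v.1 = u.1 - 1 ∧ v.2 = u.2) ∨
    (v.1 = u.1 ∧ v.2 = u.2 + 1) ∨ (v.1 = u.1 ∧ v.2 = u.2 - 1) := by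
  unfold ZAdj
  rcases abs_cases (u.1 - v.1) with ⟨h1, _⟩ | ⟨h1, _⟩ <;>
    rcases abs_cases (u.2 - v.2) with ⟨h2, _⟩ | ⟨h2, _⟩ <;>
      rw [h1, h2] <;> omega

lemma zadj_symm {u v : ℤ × ℤ} (h : ZAdj u v) : ZAdj v u := by
  rw [zadj_iff] at h ⊢; omega

lemma present_horiz (ω : Config) {m n : ℤ} :
    contourCfg ω ((m, n), true) = true ↔ Even (m + n) ∧ ω (m, n) ≠ ω (m, n + 1) := by
  unfold contourCfg IsBlackFace
  by_cases h : Even (m + n) <;> simp [h, bne_iff_ne]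

lemma present_vert (ω : Config) {m n : ℤ} :
    contourCfg ω ((m, n), false) = true ↔ Even (m + n) ∧ ω (m, n) ≠ ω (m + 1, n) := by
  unfold contourCfg IsBlackFace
  by_cases h : Even (m + n) <;> simp [h, bne_iff_ne]

/-- If a horizontal contour edge is present, the two rows across its face agree. -/
lemma rows_of_horiz {ω : Config} (hω : Constrained ω) {m n : ℤ}
    (h : contourCfg ω ((m, n), true) = true) :
    ω (m, n) = ω (m + 1, n) ∧ ω (m, n + 1) = ω (m + 1, n + 1) := by
  rw [present_horiz] at h
  rcases hω m n h.1 with hc | hc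
  · exact absurd hc.1 h.2
  · exact hc

/-- If a vertical contour edge is present, the two columns across its face agree. -/
lemma cols_of_vert {ω : Config} (hω : Constrained ω) {m n : ℤ}
    (h : contourCfg ω ((m, n), false) = true) :
    ω (m, n) = ω (m, n + 1) ∧ ω (m + 1, n) = ω (m + 1, n + 1) := by
  rw [present_vert] at h
  rcases hω m n h.1 with hc | hc
  · exact hc
  · exact absurd hc.1 h.2

lemma not_both {ω : Config} (hω : Constrained ω) {m n : ℤ}
    (h : contourCfg ω ((m, n), true) = true)
    (h' : contourCfg ω ((m, n), false) = true) : False := by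
  rw [present_horiz] at h; rw [present_vert] at h'
  rcases hω m n h.1 with hc | hc
  · exact h.2 hc.1
  · exact h'.2 hc.1

set_option maxHeartbeats 1000000 in
lemma crossesG_horiz_iff {m n : ℤ} {u v : ℤ × ℤ} :
    crossesG ((m, n), true) u v ↔
      (u = (m, n) ∧ v = (m, n + 1)) ∨ (u = (m, n + 1) ∧ v = (m, n)) ∨
      (u = (m + 1, n) ∧ v = (m + 1, n + 1)) ∨ (u = (m + 1, n + 1) ∧ v = (m + 1, n)) := by
  unfold crossesG
  rw [if_pos rfl, zadj_iff]
  simp only [Prod.mk.injEq, Prod.ext_iff]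
  omega

set_option maxHeartbeats 1000000 in
lemma crossesG_vert_iff {m n : ℤ} {u v : ℤ × ℤ} :
    crossesG ((m, n), false) u v ↔
      (u = (m, n) ∧ v = (m + 1, n)) ∨ (u = (m + 1, n) ∧ v = (m, n)) ∨
      (u = (m, n + 1) ∧ v = (m + 1, n + 1)) ∨ (u = (m + 1, n + 1) ∧ v = (m, n + 1)) := by
  unfold crossesG
  rw [if_neg (by simp), zadj_iff]
  simp only [Prod.mk.injEq, Prod.ext_iff]
  omega

lemma crossesG_symm {e : BEdge} {u v : ℤ × ℤ} (h : crossesG e u v) : crossesG e v u := by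
  obtain ⟨⟨m, n⟩, d⟩ := e
  cases d
  · rw [crossesG_vert_iff] at h ⊢; tauto
  · rw [crossesG_horiz_iff] at h ⊢; tauto

lemma cross_corner {e : BEdge} {u v : ℤ × ℤ} (h : crossesG e u v) : EdgeIncVtx e u := by
  obtain ⟨⟨m, n⟩, d⟩ := e
  unfold EdgeIncVtx
  cases d
  · rw [crossesG_vert_iff] at h
    rcases h with ⟨h, -⟩ | ⟨h, -⟩ | ⟨h, -⟩ | ⟨h, -⟩ <;> subst h <;> simp
  · rw [crossesG_horiz_iff] at h
    rcases h with ⟨h, -⟩ | ⟨h, -⟩ | ⟨h, -⟩ | ⟨h, -⟩ <;> subst h <;> simp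

/-- Crossed `G`-edges are disagreement edges. -/
lemma cross_ne {ω : Config} (hω : Constrained ω) {e : BEdge} {u v : ℤ × ℤ}
    (hp : contourCfg ω e = true) (h : crossesG e u v) : ω u ≠ ω v := by
  obtain ⟨⟨m, n⟩, d⟩ := e
  cases d
  · have hcols := cols_of_vert hω hp
    rw [present_vert] at hp
    rw [crossesG_vert_iff] at h
    have h2 : ω (m, n + 1) ≠ ω (m + 1, n + 1) := by
      rw [← hcols.1, ← hcols.2]; exact hp.2
    rcases h with ⟨h1, h2'⟩ | ⟨h1, h2'⟩ | ⟨h1, h2'⟩ | ⟨h1, h2'⟩ <;> subst h1 <;> subst h2'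
    · exact hp.2
    · exact fun hh => hp.2 hh.symm
    · exact h2
    · exact fun hh => h2 hh.symm
  · have hrows := rows_of_horiz hω hp
    rw [present_horiz] at hp
    rw [crossesG_horiz_iff] at h
    have h2 : ω (m + 1, n) ≠ ω (m + 1, n + 1) := by
      rw [← hrows.1, ← hrows.2]; exact hp.2
    rcases h with ⟨h1, h2'⟩ | ⟨h1, h2'⟩ | ⟨h1, h2'⟩ | ⟨h1, h2'⟩ <;> subst h1 <;> subst h2'
    · exact hp.2
    · exact fun hh => hp.2 hh.symm
    · exact h2
    · exact fun hh => h2 hh.symm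

/-- Every disagreement on a vertical `G`-edge is crossed by a present horizontal
contour edge. -/
lemma exists_cross_vert {ω : Config} (hω : Constrained ω) {x y : ℤ}
    (hne : ω (x, y) ≠ ω (x, y + 1)) :
    ∃ m, (m = x - 1 ∨ m = x) ∧ contourCfg ω ((m, y), true) = true ∧
      crossesG ((m, y), true) (x, y) (x, y + 1) := by
  rcases Int.even_or_odd (x + y) with he | ho
  · refine ⟨x, Or.inr rfl, ?_, ?_⟩
    · rw [present_horiz]; exact ⟨he, hne⟩
    · rw [crossesG_horiz_iff]; exact Or.inl ⟨rfl, rfl⟩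
  · have hx : x - 1 + 1 = x := by omega
    have he : Even (x - 1 + y) := by obtain ⟨k, hk⟩ := ho; exact ⟨k, by omega⟩
    have hc := hω (x - 1) y he
    rw [hx] at hc
    refine ⟨x - 1, Or.inl rfl, ?_, ?_⟩
    · rw [present_horiz]
      refine ⟨he, fun hagree => ?_⟩
      rcases hc with hc | hc
      · exact hne hc.2
      · rw [hc.1, hc.2] at hagree; exact hne hagree
    · rw [crossesG_horiz_iff, hx]
      exact Or.inr (Or.inr (Or.inl ⟨rfl, rfl⟩))

/-- Every disagreement on a horizontal `G`-edge is crossed by a present vertical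
contour edge. -/
lemma exists_cross_horiz {ω : Config} (hω : Constrained ω) {x y : ℤ}
    (hne : ω (x, y) ≠ ω (x + 1, y)) :
    ∃ n, (n = y - 1 ∨ n = y) ∧ contourCfg ω ((x, n), false) = true ∧
      crossesG ((x, n), false) (x, y) (x + 1, y) := by
  rcases Int.even_or_odd (x + y) with he | ho
  · refine ⟨y, Or.inr rfl, ?_, ?_⟩
    · rw [present_vert]; exact ⟨he, hne⟩
    · rw [crossesG_vert_iff]; exact Or.inl ⟨rfl, rfl⟩
  · have hy : y - 1 + 1 = y := by omega
    have he : Even (x + (y - 1)) := by obtain ⟨k, hk⟩ := ho; exact ⟨k, by omega⟩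
    have hc := hω x (y - 1) he
    rw [hy] at hc
    refine ⟨y - 1, Or.inl rfl, ?_, ?_⟩
    · rw [present_vert]
      refine ⟨he, fun hagree => ?_⟩
      rcases hc with hc | hc
      · rw [hc.1, hc.2] at hagree; exact hne hagree
      · exact hne hc.2
    · rw [crossesG_vert_iff, hy]
      exact Or.inr (Or.inr (Or.inl ⟨rfl, rfl⟩))

end S7

namespace S7
open Relation

/-! #### Cluster basics -/

lemma sameCluster_symm {ω : Config} {u v : ℤ × ℤ} (h : SameCluster ω u v) :
    SameCluster ω v u :=
  @Std.Symm.symm _ _ (@Relation.ReflTransGen.stdSymm _ _ ⟨fun _ _ hab => ⟨zadj_symm hab.1, hab.2.symm⟩⟩) _ _ h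

lemma sameCluster_eqstate {ω : Config} {u v : ℤ × ℤ} (h : SameCluster ω u v) :
    ω u = ω v := by
  induction h with
  | refl => rfl
  | tail _ h ih => exact ih.trans h.2

lemma mem_cluster_self (ω : Config) (v : ℤ × ℤ) : v ∈ cluster ω v :=
  Relation.ReflTransGen.refl

lemma cluster_mono {ω : Config} {z u v : ℤ × ℤ} (hu : u ∈ cluster ω z)
    (hv : v ∈ cluster ω z) : ω u = ω v :=
  (sameCluster_eqstate hu).symm.trans (sameCluster_eqstate hv)

lemma mem_cluster_step {ω : Config} {z u w : ℤ × ℤ} (hu : u ∈ cluster ω z)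
    (ha : ZAdj u w) (he : ω u = ω w) : w ∈ cluster ω z :=
  Relation.ReflTransGen.tail hu ⟨ha, he⟩

lemma mem_cluster_iff_step {ω : Config} {z u w : ℤ × ℤ}
    (ha : ZAdj u w) (he : ω u = ω w) : u ∈ cluster ω z ↔ w ∈ cluster ω z :=
  ⟨fun hu => mem_cluster_step hu ha he,
   fun hw => mem_cluster_step hw (zadj_symm ha) he.symm⟩

lemma cluster_eq_of_mem {ω : Config} {z v : ℤ × ℤ} (h : v ∈ cluster ω z) :
    cluster ω z = cluster ω v := by
  ext w
  exact ⟨fun hw => Relation.ReflTransGen.trans (sameCluster_symm h) hw,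
    fun hw => Relation.ReflTransGen.trans h hw⟩

/-! #### Contour basics -/

lemma shareEnd_symm {a b : BEdge} (h : shareEnd a b) : shareEnd b a := by
  unfold shareEnd at h ⊢
  rcases h with h | h | h | h
  · exact Or.inl h.symm
  · exact Or.inr (Or.inr (Or.inl h.symm))
  · exact Or.inr (Or.inl h.symm)
  · exact Or.inr (Or.inr (Or.inr h.symm))

lemma mem_contour_present {φg : BEdge → Bool} {a b : BEdge}
    (h : b ∈ contourB φg a) (ha : φg a = true) : φg b = true := by
  induction h with
  | refl => exact ha
  | tail _ h _ => exact h.2.1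

lemma contourB_symm_mem {φg : BEdge → Bool} {a b : BEdge} (h : b ∈ contourB φg a) :
    a ∈ contourB φg b :=
  @Std.Symm.symm _ _ (@Relation.ReflTransGen.stdSymm _ _
    ⟨fun _ _ hab => ⟨hab.2.1, hab.1, shareEnd_symm hab.2.2⟩⟩) _ _ h

lemma contourB_eq_of_mem {φg : BEdge → Bool} {a b : BEdge} (h : b ∈ contourB φg a) :
    contourB φg a = contourB φg b := by
  ext c
  exact ⟨fun hc => Relation.ReflTransGen.trans (contourB_symm_mem h) hc,
    fun hc => Relation.ReflTransGen.trans h hc⟩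

lemma isContour_present {ω : Config} {C : Set BEdge} (h : IsContour ω C) {e : BEdge}
    (he : e ∈ C) : contourCfg ω e = true := by
  obtain ⟨b, hb, rfl⟩ := h
  exact mem_contour_present he hb

lemma isContour_base {ω : Config} {C : Set BEdge} (h : IsContour ω C) :
    ∃ e ∈ C, contourCfg ω e = true := by
  obtain ⟨b, hb, rfl⟩ := h
  exact ⟨b, Relation.ReflTransGen.refl, hb⟩

lemma isContour_closed {ω : Config} {C : Set BEdge} (h : IsContour ω C) {e f : BEdge}
    (he : e ∈ C) (hf : contourCfg ω f = true) (hs : shareEnd e f) : f ∈ C := by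
  obtain ⟨b, hb, rfl⟩ := h
  exact Relation.ReflTransGen.tail he ⟨mem_contour_present he hb, hf, hs⟩

lemma isContour_eq_contourB {ω : Config} {C : Set BEdge} (h : IsContour ω C) {e : BEdge}
    (he : e ∈ C) : C = contourB (contourCfg ω) e := by
  obtain ⟨b, hb, rfl⟩ := h
  exact contourB_eq_of_mem he

lemma contour_disjoint {ω : Config} {C₁ C₂ : Set BEdge} (h1 : IsContour ω C₁)
    (h2 : IsContour ω C₂) (hne : C₁ ≠ C₂) {e : BEdge} (he1 : e ∈ C₁) (he2 : e ∈ C₂) :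
    False := by
  exact hne ((isContour_eq_contourB h1 he1).trans (isContour_eq_contourB h2 he2).symm)

/-! #### The four edge-slots at a lattice vertex -/

def slotE (x y : ℤ) : BEdge := ((x + 1, y), true)
def slotW (x y : ℤ) : BEdge := ((x - 1, y), true)
def slotN (x y : ℤ) : BEdge := ((x, y + 1), false)
def slotS (x y : ℤ) : BEdge := ((x, y - 1), false)

lemma ends_horiz (m n : ℤ) :
    edgeEnds ((m, n), true) = ((2 * m - 1, 2 * n + 1), (2 * m + 3, 2 * n + 1)) := by
  unfold edgeEnds; rw [if_pos rfl]

lemma ends_vert (m n : ℤ) :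
    edgeEnds ((m, n), false) = ((2 * m + 1, 2 * n - 1), (2 * m + 1, 2 * n + 3)) := by
  unfold edgeEnds; rw [if_neg (by simp)]

lemma slotE_ends (x y : ℤ) :
    edgeEnds (slotE x y) = ((2 * x + 1, 2 * y + 1), (2 * x + 5, 2 * y + 1)) := by
  unfold slotE; rw [ends_horiz]; simp only [Prod.mk.injEq, and_true, true_and]; omega

lemma slotW_ends (x y : ℤ) :
    edgeEnds (slotW x y) = ((2 * x - 3, 2 * y + 1), (2 * x + 1, 2 * y + 1)) := by
  unfold slotW; rw [ends_horiz]; simp only [Prod.mk.injEq, and_true, true_and]; omega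

lemma slotN_ends (x y : ℤ) :
    edgeEnds (slotN x y) = ((2 * x + 1, 2 * y + 1), (2 * x + 1, 2 * y + 5)) := by
  unfold slotN; rw [ends_vert]; simp only [Prod.mk.injEq, and_true, true_and]; omega

lemma slotS_ends (x y : ℤ) :
    edgeEnds (slotS x y) = ((2 * x + 1, 2 * y - 3), (2 * x + 1, 2 * y + 1)) := by
  unfold slotS; rw [ends_vert]; simp only [Prod.mk.injEq, and_true, true_and]; omega

/-- Every end of a present edge is the centre of a white face, and the edge is one
of the four slots there. -/
lemma end_form {ω : Config} {e : BEdge} (hp : contourCfg ω e = true) {Q : ℤ × ℤ}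
    (hQ : Q = (edgeEnds e).1 ∨ Q = (edgeEnds e).2) :
    ∃ x y : ℤ, Odd (x + y) ∧ Q = (2 * x + 1, 2 * y + 1) ∧
      (e = slotE x y ∨ e = slotW x y ∨ e = slotN x y ∨ e = slotS x y) := by
  obtain ⟨⟨m, n⟩, d⟩ := e
  cases d
  · have hb : Even (m + n) := ((present_vert ω).1 hp).1
    rw [ends_vert] at hQ
    dsimp only at hQ
    rcases hQ with h | h
    · refine ⟨m, n - 1, ?_, ?_, ?_⟩
      · obtain ⟨k, hk⟩ := hb; exact ⟨m + n - k - 1, by omega⟩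
      · rw [h]; simp only [Prod.mk.injEq, and_true, true_and]; omega
      · right; right; left
        unfold slotN
        rw [show n - 1 + 1 = n by omega]
    · refine ⟨m, n + 1, ?_, ?_, ?_⟩
      · obtain ⟨k, hk⟩ := hb; exact ⟨k, by omega⟩
      · rw [h]; simp only [Prod.mk.injEq, and_true, true_and]; omega
      · right; right; right
        unfold slotS
        rw [show n + 1 - 1 = n by omega]
  · have hb : Even (m + n) := ((present_horiz ω).1 hp).1
    rw [ends_horiz] at hQ
    dsimp only at hQ
    rcases hQ with h | h
    · refine ⟨m - 1, n, ?_, ?_, ?_⟩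
      · obtain ⟨k, hk⟩ := hb; exact ⟨m + n - k - 1, by omega⟩
      · rw [h]; simp only [Prod.mk.injEq, and_true, true_and]; omega
      · left
        unfold slotE
        rw [show m - 1 + 1 = m by omega]
    · refine ⟨m + 1, n, ?_, ?_, ?_⟩
      · obtain ⟨k, hk⟩ := hb; exact ⟨k, by omega⟩
      · rw [h]; simp only [Prod.mk.injEq, and_true, true_and]; omega
      · right; left
        unfold slotW
        rw [show m + 1 - 1 = m by omega]

/-! #### Disagreement transfer across black faces -/

lemma transfer_b {ω : Config} (hω : Constrained ω) {m n : ℤ} (hb : Even (m + n)) :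
    (ω (m, n) ≠ ω (m, n + 1)) ↔ (ω (m + 1, n) ≠ ω (m + 1, n + 1)) := by
  rcases hω m n hb with hc | hc <;> rw [hc.1, hc.2] <;> simp

lemma transfer_a {ω : Config} (hω : Constrained ω) {m n : ℤ} (hb : Even (m + n)) :
    (ω (m, n) ≠ ω (m + 1, n)) ↔ (ω (m, n + 1) ≠ ω (m + 1, n + 1)) := by
  rcases hω m n hb with hc | hc <;> rw [hc.1, hc.2] <;> simp

lemma presE {ω : Config} {x y : ℤ} (hxy : Odd (x + y)) :
    contourCfg ω (slotE x y) = true ↔ ω (x + 1, y) ≠ ω (x + 1, y + 1) := by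
  unfold slotE
  rw [present_horiz]
  have : Even (x + 1 + y) := by obtain ⟨k, hk⟩ := hxy; exact ⟨k + 1, by omega⟩
  simp [this]

lemma presW {ω : Config} (hω : Constrained ω) {x y : ℤ} (hxy : Odd (x + y)) :
    contourCfg ω (slotW x y) = true ↔ ω (x, y) ≠ ω (x, y + 1) := by
  unfold slotW
  rw [present_horiz]
  have hb : Even (x - 1 + y) := by obtain ⟨k, hk⟩ := hxy; exact ⟨k, by omega⟩
  have ht := transfer_b hω hb
  rw [show x - 1 + 1 = x by omega] at ht
  simp [hb, ht]

lemma presN {ω : Config} {x y : ℤ} (hxy : Odd (x + y)) :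
    contourCfg ω (slotN x y) = true ↔ ω (x, y + 1) ≠ ω (x + 1, y + 1) := by
  unfold slotN
  rw [present_vert]
  have : Even (x + (y + 1)) := by obtain ⟨k, hk⟩ := hxy; exact ⟨k + 1, by omega⟩
  simp [this]

lemma presS {ω : Config} (hω : Constrained ω) {x y : ℤ} (hxy : Odd (x + y)) :
    contourCfg ω (slotS x y) = true ↔ ω (x, y) ≠ ω (x + 1, y) := by
  unfold slotS
  rw [present_vert]
  have hb : Even (x + (y - 1)) := by obtain ⟨k, hk⟩ := hxy; exact ⟨k, by omega⟩
  have ht := transfer_a hω hb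
  rw [show y - 1 + 1 = y by omega] at ht
  simp [hb, ht]

/-! #### Bordering a vertex set -/

def Borders (A : Set (ℤ × ℤ)) (e : BEdge) : Prop := ∃ u v, crossesG e u v ∧ u ∈ A

lemma borders_iff {A : Set (ℤ × ℤ)} {m n : ℤ} {d : Bool} :
    Borders A ((m, n), d) ↔
      (m, n) ∈ A ∨ (m + 1, n) ∈ A ∨ (m, n + 1) ∈ A ∨ (m + 1, n + 1) ∈ A := by
  constructor
  · rintro ⟨u, v, hc, hu⟩
    cases d
    · rw [crossesG_vert_iff] at hc
      rcases hc with ⟨h, -⟩ | ⟨h, -⟩ | ⟨h, -⟩ | ⟨h, -⟩ <;> subst h <;> tauto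
    · rw [crossesG_horiz_iff] at hc
      rcases hc with ⟨h, -⟩ | ⟨h, -⟩ | ⟨h, -⟩ | ⟨h, -⟩ <;> subst h <;> tauto
  · intro h
    cases d
    · rcases h with h | h | h | h
      · exact ⟨(m, n), (m + 1, n), by rw [crossesG_vert_iff]; tauto, h⟩
      · exact ⟨(m + 1, n), (m, n), by rw [crossesG_vert_iff]; tauto, h⟩
      · exact ⟨(m, n + 1), (m + 1, n + 1), by rw [crossesG_vert_iff]; tauto, h⟩
      · exact ⟨(m + 1, n + 1), (m, n + 1), by rw [crossesG_vert_iff]; tauto, h⟩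
    · rcases h with h | h | h | h
      · exact ⟨(m, n), (m, n + 1), by rw [crossesG_horiz_iff]; tauto, h⟩
      · exact ⟨(m + 1, n), (m + 1, n + 1), by rw [crossesG_horiz_iff]; tauto, h⟩
      · exact ⟨(m, n + 1), (m, n), by rw [crossesG_horiz_iff]; tauto, h⟩
      · exact ⟨(m + 1, n + 1), (m + 1, n), by rw [crossesG_horiz_iff]; tauto, h⟩

end S7

namespace S7
open Relation

lemma zadj_mk {x1 y1 x2 y2 : ℤ}
    (h : (x2 = x1 + 1 ∧ y2 = y1) ∨ (x2 = x1 - 1 ∧ y2 = y1) ∨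
         (x2 = x1 ∧ y2 = y1 + 1) ∨ (x2 = x1 ∧ y2 = y1 - 1)) : ZAdj (x1, y1) (x2, y2) := by
  rw [zadj_iff]; exact h

section
variable {A : Set (ℤ × ℤ)} {x y : ℤ}

lemma bordersE : Borders A (slotE x y) ↔
    (x + 1, y) ∈ A ∨ (x + 2, y) ∈ A ∨ (x + 1, y + 1) ∈ A ∨ (x + 2, y + 1) ∈ A := by
  unfold slotE
  rw [borders_iff, show x + 1 + 1 = x + 2 by omega]

lemma bordersW : Borders A (slotW x y) ↔
    (x - 1, y) ∈ A ∨ (x, y) ∈ A ∨ (x - 1, y + 1) ∈ A ∨ (x, y + 1) ∈ A := by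
  unfold slotW
  rw [borders_iff, show x - 1 + 1 = x by omega]

lemma bordersN : Borders A (slotN x y) ↔
    (x, y + 1) ∈ A ∨ (x + 1, y + 1) ∈ A ∨ (x, y + 2) ∈ A ∨ (x + 1, y + 2) ∈ A := by
  unfold slotN
  rw [borders_iff, show y + 1 + 1 = y + 2 by omega]

lemma bordersS : Borders A (slotS x y) ↔
    (x, y - 1) ∈ A ∨ (x + 1, y - 1) ∈ A ∨ (x, y) ∈ A ∨ (x + 1, y) ∈ A := by
  unfold slotS
  rw [borders_iff, show y - 1 + 1 = y by omega]

end

lemma slots_parity {ω : Config} (hω : Constrained ω) {x y : ℤ} (hxy : Odd (x + y)) :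
    ((contourCfg ω (slotE x y) = true) ↔ (contourCfg ω (slotW x y) = true)) ↔
    ((contourCfg ω (slotN x y) = true) ↔ (contourCfg ω (slotS x y) = true)) := by
  rw [presE hxy, presW hω hxy, presN hxy, presS hω hxy]
  rcases Bool.eq_false_or_eq_true (ω (x, y)) with h00 | h00 <;>
    rcases Bool.eq_false_or_eq_true (ω (x + 1, y)) with h10 | h10 <;>
      rcases Bool.eq_false_or_eq_true (ω (x, y + 1)) with h01 | h01 <;>
        rcases Bool.eq_false_or_eq_true (ω (x + 1, y + 1)) with h11 | h11 <;>
          simp [h00, h10, h01, h11]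

section
variable {ω : Config} (hω : Constrained ω) (z : ℤ × ℤ) {x y : ℤ} (hxy : Odd (x + y))

/-- The counting expression at the white face `(x, y)`. -/
def slotCount (ω : Config) (z : ℤ × ℤ) (x y : ℤ) : ℕ :=
  (if contourCfg ω (slotE x y) = true ∧ Borders (cluster ω z) (slotE x y) then 1 else 0) +
  (if contourCfg ω (slotW x y) = true ∧ Borders (cluster ω z) (slotW x y) then 1 else 0) +
  (if contourCfg ω (slotN x y) = true ∧ Borders (cluster ω z) (slotN x y) then 1 else 0) +
  (if contourCfg ω (slotS x y) = true ∧ Borders (cluster ω z) (slotS x y) then 1 else 0)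

end

section caseLemmas

variable {ω : Config} {z : ℤ × ℤ} {x y : ℤ}

/-- E and W present, N and S absent. -/
lemma case_EW (hω : Constrained ω) (hxy : Odd (x + y))
    (hE : contourCfg ω (slotE x y) = true) (hW : contourCfg ω (slotW x y) = true)
    (hN : ¬contourCfg ω (slotN x y) = true) (hS : ¬contourCfg ω (slotS x y) = true) :
    Even (slotCount ω z x y) := by
  have aB : ω (x, y) = ω (x + 1, y) := by
    by_contra hne; exact hS ((presS hω hxy).2 hne)
  have aT : ω (x, y + 1) = ω (x + 1, y + 1) := by
    by_contra hne; exact hN ((presN hxy).2 hne)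
  have hW' : contourCfg ω ((x - 1, y), true) = true := hW
  have hE' : contourCfg ω ((x + 1, y), true) = true := hE
  have rW := rows_of_horiz hω hW'
  rw [show x - 1 + 1 = x by omega] at rW
  have rE := rows_of_horiz hω hE'
  rw [show x + 1 + 1 = x + 2 by omega] at rE
  have m1 : ((x - 1, y) ∈ cluster ω z) ↔ ((x, y) ∈ cluster ω z) :=
    mem_cluster_iff_step (zadj_mk (by omega)) rW.1
  have m2 : ((x - 1, y + 1) ∈ cluster ω z) ↔ ((x, y + 1) ∈ cluster ω z) :=
    mem_cluster_iff_step (zadj_mk (by omega)) rW.2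
  have m3 : ((x + 2, y) ∈ cluster ω z) ↔ ((x + 1, y) ∈ cluster ω z) :=
    mem_cluster_iff_step (zadj_mk (by omega)) rE.1.symm
  have m4 : ((x + 2, y + 1) ∈ cluster ω z) ↔ ((x + 1, y + 1) ∈ cluster ω z) :=
    mem_cluster_iff_step (zadj_mk (by omega)) rE.2.symm
  have m5 : ((x + 1, y) ∈ cluster ω z) ↔ ((x, y) ∈ cluster ω z) :=
    mem_cluster_iff_step (zadj_mk (by omega)) aB.symm
  have m6 : ((x + 1, y + 1) ∈ cluster ω z) ↔ ((x, y + 1) ∈ cluster ω z) :=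
    mem_cluster_iff_step (zadj_mk (by omega)) aT.symm
  unfold slotCount
  simp only [hE, hW, hN, hS, bordersE, bordersW, bordersN, bordersS,
    m1, m2, m3, m4, m5, m6, true_and, false_and, if_false, and_true]
  by_cases hp : (x, y) ∈ cluster ω z <;> by_cases hr : (x, y + 1) ∈ cluster ω z <;>
    simp [hp, hr]

/-- N and S present, E and W absent. -/
lemma case_NS (hω : Constrained ω) (hxy : Odd (x + y))
    (hE : ¬contourCfg ω (slotE x y) = true) (hW : ¬contourCfg ω (slotW x y) = true)
    (hN : contourCfg ω (slotN x y) = true) (hS : contourCfg ω (slotS x y) = true) :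
    Even (slotCount ω z x y) := by
  have bL : ω (x, y) = ω (x, y + 1) := by
    by_contra hne; exact hW ((presW hω hxy).2 hne)
  have bR : ω (x + 1, y) = ω (x + 1, y + 1) := by
    by_contra hne; exact hE ((presE hxy).2 hne)
  have hN' : contourCfg ω ((x, y + 1), false) = true := hN
  have hS' : contourCfg ω ((x, y - 1), false) = true := hS
  have cN := cols_of_vert hω hN'
  rw [show y + 1 + 1 = y + 2 by omega] at cN
  have cS := cols_of_vert hω hS'
  rw [show y - 1 + 1 = y by omega] at cS
  have m1 : ((x, y + 2) ∈ cluster ω z) ↔ ((x, y + 1) ∈ cluster ω z) :=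
    mem_cluster_iff_step (zadj_mk (by omega)) cN.1.symm
  have m2 : ((x + 1, y + 2) ∈ cluster ω z) ↔ ((x + 1, y + 1) ∈ cluster ω z) :=
    mem_cluster_iff_step (zadj_mk (by omega)) cN.2.symm
  have m3 : ((x, y - 1) ∈ cluster ω z) ↔ ((x, y) ∈ cluster ω z) :=
    mem_cluster_iff_step (zadj_mk (by omega)) cS.1
  have m4 : ((x + 1, y - 1) ∈ cluster ω z) ↔ ((x + 1, y) ∈ cluster ω z) :=
    mem_cluster_iff_step (zadj_mk (by omega)) cS.2
  have m5 : ((x, y + 1) ∈ cluster ω z) ↔ ((x, y) ∈ cluster ω z) :=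
    mem_cluster_iff_step (zadj_mk (by omega)) bL.symm
  have m6 : ((x + 1, y + 1) ∈ cluster ω z) ↔ ((x + 1, y) ∈ cluster ω z) :=
    mem_cluster_iff_step (zadj_mk (by omega)) bR.symm
  unfold slotCount
  simp only [hE, hW, hN, hS, bordersE, bordersW, bordersN, bordersS,
    m1, m2, m3, m4, m5, m6, true_and, false_and, if_false, and_true]
  by_cases hp : (x, y) ∈ cluster ω z <;> by_cases hq : (x + 1, y) ∈ cluster ω z <;>
    simp [hp, hq]

/-- W and N present, E and S absent (a turn). -/
lemma case_WN (hω : Constrained ω) (hxy : Odd (x + y))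
    (hE : ¬contourCfg ω (slotE x y) = true) (hW : contourCfg ω (slotW x y) = true)
    (hN : contourCfg ω (slotN x y) = true) (hS : ¬contourCfg ω (slotS x y) = true) :
    Even (slotCount ω z x y) := by
  have aB : ω (x, y) = ω (x + 1, y) := by
    by_contra hne; exact hS ((presS hω hxy).2 hne)
  have bR : ω (x + 1, y) = ω (x + 1, y + 1) := by
    by_contra hne; exact hE ((presE hxy).2 hne)
  have hW' : contourCfg ω ((x - 1, y), true) = true := hW
  have hN' : contourCfg ω ((x, y + 1), false) = true := hN
  have rW := rows_of_horiz hω hW'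
  rw [show x - 1 + 1 = x by omega] at rW
  have cN := cols_of_vert hω hN'
  rw [show y + 1 + 1 = y + 2 by omega] at cN
  have m1 : ((x - 1, y) ∈ cluster ω z) ↔ ((x, y) ∈ cluster ω z) :=
    mem_cluster_iff_step (zadj_mk (by omega)) rW.1
  have m2 : ((x - 1, y + 1) ∈ cluster ω z) ↔ ((x, y + 1) ∈ cluster ω z) :=
    mem_cluster_iff_step (zadj_mk (by omega)) rW.2
  have m3 : ((x, y + 2) ∈ cluster ω z) ↔ ((x, y + 1) ∈ cluster ω z) :=
    mem_cluster_iff_step (zadj_mk (by omega)) cN.1.symm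
  have m4 : ((x + 1, y + 2) ∈ cluster ω z) ↔ ((x + 1, y + 1) ∈ cluster ω z) :=
    mem_cluster_iff_step (zadj_mk (by omega)) cN.2.symm
  have m5 : ((x + 1, y + 1) ∈ cluster ω z) ↔ ((x + 1, y) ∈ cluster ω z) :=
    mem_cluster_iff_step (zadj_mk (by omega)) bR.symm
  have m6 : ((x + 1, y) ∈ cluster ω z) ↔ ((x, y) ∈ cluster ω z) :=
    mem_cluster_iff_step (zadj_mk (by omega)) aB.symm
  unfold slotCount
  simp only [hE, hW, hN, hS, bordersE, bordersW, bordersN, bordersS,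
    m1, m2, m3, m4, m5, m6, true_and, false_and, if_false, and_true]
  by_cases hp : (x, y) ∈ cluster ω z <;> by_cases hr : (x, y + 1) ∈ cluster ω z <;>
    simp [hp, hr]

/-- W and S present, E and N absent (a turn). -/
lemma case_WS (hω : Constrained ω) (hxy : Odd (x + y))
    (hE : ¬contourCfg ω (slotE x y) = true) (hW : contourCfg ω (slotW x y) = true)
    (hN : ¬contourCfg ω (slotN x y) = true) (hS : contourCfg ω (slotS x y) = true) :
    Even (slotCount ω z x y) := by
  have aT : ω (x, y + 1) = ω (x + 1, y + 1) := by
    by_contra hne; exact hN ((presN hxy).2 hne)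
  have bR : ω (x + 1, y) = ω (x + 1, y + 1) := by
    by_contra hne; exact hE ((presE hxy).2 hne)
  have hW' : contourCfg ω ((x - 1, y), true) = true := hW
  have hS' : contourCfg ω ((x, y - 1), false) = true := hS
  have rW := rows_of_horiz hω hW'
  rw [show x - 1 + 1 = x by omega] at rW
  have cS := cols_of_vert hω hS'
  rw [show y - 1 + 1 = y by omega] at cS
  have m1 : ((x - 1, y) ∈ cluster ω z) ↔ ((x, y) ∈ cluster ω z) :=
    mem_cluster_iff_step (zadj_mk (by omega)) rW.1
  have m2 : ((x - 1, y + 1) ∈ cluster ω z) ↔ ((x, y + 1) ∈ cluster ω z) :=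
    mem_cluster_iff_step (zadj_mk (by omega)) rW.2
  have m3 : ((x, y - 1) ∈ cluster ω z) ↔ ((x, y) ∈ cluster ω z) :=
    mem_cluster_iff_step (zadj_mk (by omega)) cS.1
  have m4 : ((x + 1, y - 1) ∈ cluster ω z) ↔ ((x + 1, y) ∈ cluster ω z) :=
    mem_cluster_iff_step (zadj_mk (by omega)) cS.2
  have m5 : ((x + 1, y + 1) ∈ cluster ω z) ↔ ((x + 1, y) ∈ cluster ω z) :=
    mem_cluster_iff_step (zadj_mk (by omega)) bR.symm
  have m6 : ((x + 1, y) ∈ cluster ω z) ↔ ((x, y + 1) ∈ cluster ω z) := by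
    have m6a : ((x + 1, y) ∈ cluster ω z) ↔ ((x + 1, y + 1) ∈ cluster ω z) :=
      mem_cluster_iff_step (zadj_mk (by omega)) bR
    have m6b : ((x + 1, y + 1) ∈ cluster ω z) ↔ ((x, y + 1) ∈ cluster ω z) :=
      mem_cluster_iff_step (zadj_mk (by omega)) aT.symm
    exact m6a.trans m6b
  unfold slotCount
  simp only [hE, hW, hN, hS, bordersE, bordersW, bordersN, bordersS,
    m1, m2, m3, m4, m5, m6, true_and, false_and, if_false, and_true]
  by_cases hp : (x, y) ∈ cluster ω z <;> by_cases hr : (x, y + 1) ∈ cluster ω z <;>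
    simp [hp, hr]

/-- E and N present, W and S absent (a turn). -/
lemma case_EN (hω : Constrained ω) (hxy : Odd (x + y))
    (hE : contourCfg ω (slotE x y) = true) (hW : ¬contourCfg ω (slotW x y) = true)
    (hN : contourCfg ω (slotN x y) = true) (hS : ¬contourCfg ω (slotS x y) = true) :
    Even (slotCount ω z x y) := by
  have aB : ω (x, y) = ω (x + 1, y) := by
    by_contra hne; exact hS ((presS hω hxy).2 hne)
  have bL : ω (x, y) = ω (x, y + 1) := by
    by_contra hne; exact hW ((presW hω hxy).2 hne)
  have hE' : contourCfg ω ((x + 1, y), true) = true := hE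
  have hN' : contourCfg ω ((x, y + 1), false) = true := hN
  have rE := rows_of_horiz hω hE'
  rw [show x + 1 + 1 = x + 2 by omega] at rE
  have cN := cols_of_vert hω hN'
  rw [show y + 1 + 1 = y + 2 by omega] at cN
  have m1 : ((x + 2, y) ∈ cluster ω z) ↔ ((x + 1, y) ∈ cluster ω z) :=
    mem_cluster_iff_step (zadj_mk (by omega)) rE.1.symm
  have m2 : ((x + 2, y + 1) ∈ cluster ω z) ↔ ((x + 1, y + 1) ∈ cluster ω z) :=
    mem_cluster_iff_step (zadj_mk (by omega)) rE.2.symm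
  have m3 : ((x, y + 2) ∈ cluster ω z) ↔ ((x, y + 1) ∈ cluster ω z) :=
    mem_cluster_iff_step (zadj_mk (by omega)) cN.1.symm
  have m4 : ((x + 1, y + 2) ∈ cluster ω z) ↔ ((x + 1, y + 1) ∈ cluster ω z) :=
    mem_cluster_iff_step (zadj_mk (by omega)) cN.2.symm
  have m5 : ((x, y) ∈ cluster ω z) ↔ ((x + 1, y) ∈ cluster ω z) :=
    mem_cluster_iff_step (zadj_mk (by omega)) aB
  have m6 : ((x, y + 1) ∈ cluster ω z) ↔ ((x + 1, y) ∈ cluster ω z) := by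
    have m6a : ((x, y + 1) ∈ cluster ω z) ↔ ((x, y) ∈ cluster ω z) :=
      mem_cluster_iff_step (zadj_mk (by omega)) bL.symm
    exact m6a.trans m5
  unfold slotCount
  simp only [hE, hW, hN, hS, bordersE, bordersW, bordersN, bordersS,
    m1, m2, m3, m4, m5, m6, true_and, false_and, if_false, and_true]
  by_cases hq : (x + 1, y) ∈ cluster ω z <;>
    by_cases ht : (x + 1, y + 1) ∈ cluster ω z <;> simp [hq, ht]

/-- E and S present, W and N absent (a turn). -/
lemma case_ES (hω : Constrained ω) (hxy : Odd (x + y))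
    (hE : contourCfg ω (slotE x y) = true) (hW : ¬contourCfg ω (slotW x y) = true)
    (hN : ¬contourCfg ω (slotN x y) = true) (hS : contourCfg ω (slotS x y) = true) :
    Even (slotCount ω z x y) := by
  have aT : ω (x, y + 1) = ω (x + 1, y + 1) := by
    by_contra hne; exact hN ((presN hxy).2 hne)
  have bL : ω (x, y) = ω (x, y + 1) := by
    by_contra hne; exact hW ((presW hω hxy).2 hne)
  have hE' : contourCfg ω ((x + 1, y), true) = true := hE
  have hS' : contourCfg ω ((x, y - 1), false) = true := hS
  have rE := rows_of_horiz hω hE'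
  rw [show x + 1 + 1 = x + 2 by omega] at rE
  have cS := cols_of_vert hω hS'
  rw [show y - 1 + 1 = y by omega] at cS
  have m1 : ((x + 2, y) ∈ cluster ω z) ↔ ((x + 1, y) ∈ cluster ω z) :=
    mem_cluster_iff_step (zadj_mk (by omega)) rE.1.symm
  have m2 : ((x + 2, y + 1) ∈ cluster ω z) ↔ ((x + 1, y + 1) ∈ cluster ω z) :=
    mem_cluster_iff_step (zadj_mk (by omega)) rE.2.symm
  have m3 : ((x, y - 1) ∈ cluster ω z) ↔ ((x, y) ∈ cluster ω z) :=
    mem_cluster_iff_step (zadj_mk (by omega)) cS.1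
  have m4 : ((x + 1, y - 1) ∈ cluster ω z) ↔ ((x + 1, y) ∈ cluster ω z) :=
    mem_cluster_iff_step (zadj_mk (by omega)) cS.2
  have m5 : ((x, y) ∈ cluster ω z) ↔ ((x + 1, y + 1) ∈ cluster ω z) := by
    have m5a : ((x, y) ∈ cluster ω z) ↔ ((x, y + 1) ∈ cluster ω z) :=
      mem_cluster_iff_step (zadj_mk (by omega)) bL
    have m5b : ((x, y + 1) ∈ cluster ω z) ↔ ((x + 1, y + 1) ∈ cluster ω z) :=
      mem_cluster_iff_step (zadj_mk (by omega)) aT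
    exact m5a.trans m5b
  have m6 : ((x, y + 1) ∈ cluster ω z) ↔ ((x + 1, y + 1) ∈ cluster ω z) :=
    mem_cluster_iff_step (zadj_mk (by omega)) aT
  unfold slotCount
  simp only [hE, hW, hN, hS, bordersE, bordersW, bordersN, bordersS,
    m1, m2, m3, m4, m5, m6, true_and, false_and, if_false, and_true]
  by_cases hq : (x + 1, y) ∈ cluster ω z <;>
    by_cases ht : (x + 1, y + 1) ∈ cluster ω z <;> simp [hq, ht]

/-- All four slots present (a junction). -/
lemma case_junction (hω : Constrained ω) (hxy : Odd (x + y))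
    (hE : contourCfg ω (slotE x y) = true) (hW : contourCfg ω (slotW x y) = true)
    (hN : contourCfg ω (slotN x y) = true) (hS : contourCfg ω (slotS x y) = true) :
    Even (slotCount ω z x y) := by
  have sE : ω (x + 1, y) ≠ ω (x + 1, y + 1) := (presE hxy).1 hE
  have sW : ω (x, y) ≠ ω (x, y + 1) := (presW hω hxy).1 hW
  have sN : ω (x, y + 1) ≠ ω (x + 1, y + 1) := (presN hxy).1 hN
  have sS : ω (x, y) ≠ ω (x + 1, y) := (presS hω hxy).1 hS
  have hW' : contourCfg ω ((x - 1, y), true) = true := hW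
  have hE' : contourCfg ω ((x + 1, y), true) = true := hE
  have hN' : contourCfg ω ((x, y + 1), false) = true := hN
  have hS' : contourCfg ω ((x, y - 1), false) = true := hS
  have rW := rows_of_horiz hω hW'
  rw [show x - 1 + 1 = x by omega] at rW
  have rE := rows_of_horiz hω hE'
  rw [show x + 1 + 1 = x + 2 by omega] at rE
  have cN := cols_of_vert hω hN'
  rw [show y + 1 + 1 = y + 2 by omega] at cN
  have cS := cols_of_vert hω hS'
  rw [show y - 1 + 1 = y by omega] at cS
  have m1 : ((x - 1, y) ∈ cluster ω z) ↔ ((x, y) ∈ cluster ω z) :=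
    mem_cluster_iff_step (zadj_mk (by omega)) rW.1
  have m2 : ((x - 1, y + 1) ∈ cluster ω z) ↔ ((x, y + 1) ∈ cluster ω z) :=
    mem_cluster_iff_step (zadj_mk (by omega)) rW.2
  have m3 : ((x + 2, y) ∈ cluster ω z) ↔ ((x + 1, y) ∈ cluster ω z) :=
    mem_cluster_iff_step (zadj_mk (by omega)) rE.1.symm
  have m4 : ((x + 2, y + 1) ∈ cluster ω z) ↔ ((x + 1, y + 1) ∈ cluster ω z) :=
    mem_cluster_iff_step (zadj_mk (by omega)) rE.2.symm
  have m5 : ((x, y + 2) ∈ cluster ω z) ↔ ((x, y + 1) ∈ cluster ω z) :=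
    mem_cluster_iff_step (zadj_mk (by omega)) cN.1.symm
  have m6 : ((x + 1, y + 2) ∈ cluster ω z) ↔ ((x + 1, y + 1) ∈ cluster ω z) :=
    mem_cluster_iff_step (zadj_mk (by omega)) cN.2.symm
  have m7 : ((x, y - 1) ∈ cluster ω z) ↔ ((x, y) ∈ cluster ω z) :=
    mem_cluster_iff_step (zadj_mk (by omega)) cS.1
  have m8 : ((x + 1, y - 1) ∈ cluster ω z) ↔ ((x + 1, y) ∈ cluster ω z) :=
    mem_cluster_iff_step (zadj_mk (by omega)) cS.2
  have ex1 : ¬((x, y) ∈ cluster ω z ∧ (x + 1, y) ∈ cluster ω z) :=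
    fun ⟨h1, h2⟩ => sS (cluster_mono h1 h2)
  have ex2 : ¬((x, y) ∈ cluster ω z ∧ (x, y + 1) ∈ cluster ω z) :=
    fun ⟨h1, h2⟩ => sW (cluster_mono h1 h2)
  have ex3 : ¬((x + 1, y + 1) ∈ cluster ω z ∧ (x + 1, y) ∈ cluster ω z) :=
    fun ⟨h1, h2⟩ => sE (cluster_mono h2 h1)
  have ex4 : ¬((x + 1, y + 1) ∈ cluster ω z ∧ (x, y + 1) ∈ cluster ω z) :=
    fun ⟨h1, h2⟩ => sN (cluster_mono h2 h1)
  unfold slotCount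
  simp only [hE, hW, hN, hS, bordersE, bordersW, bordersN, bordersS,
    m1, m2, m3, m4, m5, m6, m7, m8, true_and, false_and, if_false, and_true]
  by_cases hp : (x, y) ∈ cluster ω z
  · have hq : (x + 1, y) ∉ cluster ω z := fun h => ex1 ⟨hp, h⟩
    have hr : (x, y + 1) ∉ cluster ω z := fun h => ex2 ⟨hp, h⟩
    by_cases ht : (x + 1, y + 1) ∈ cluster ω z <;> simp [hp, hq, hr, ht] <;> decide
  · by_cases ht : (x + 1, y + 1) ∈ cluster ω z
    · have hq : (x + 1, y) ∉ cluster ω z := fun h => ex3 ⟨ht, h⟩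
      have hr : (x, y + 1) ∉ cluster ω z := fun h => ex4 ⟨ht, h⟩
      simp [hp, hq, hr, ht]
    · by_cases hq : (x + 1, y) ∈ cluster ω z <;>
        by_cases hr : (x, y + 1) ∈ cluster ω z <;> simp [hp, hq, hr, ht] <;> decide

end caseLemmas

/-- At every white face, the number of present slots bordering a given cluster is even. -/
lemma even_at_Q {ω : Config} (hω : Constrained ω) (z : ℤ × ℤ) {x y : ℤ}
    (hxy : Odd (x + y)) : Even (slotCount ω z x y) := by
  have hpar := slots_parity hω hxy
  by_cases hE : contourCfg ω (slotE x y) = true <;>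
    by_cases hW : contourCfg ω (slotW x y) = true <;>
      by_cases hN : contourCfg ω (slotN x y) = true <;>
        by_cases hS : contourCfg ω (slotS x y) = true
  · exact case_junction hω hxy hE hW hN hS
  · exact absurd hpar (by tauto)
  · exact absurd hpar (by tauto)
  · exact case_EW hω hxy hE hW hN hS
  · exact absurd hpar (by tauto)
  · exact case_EN hω hxy hE hW hN hS
  · exact case_ES hω hxy hE hW hN hS
  · exact absurd hpar (by tauto)
  · exact absurd hpar (by tauto)
  · exact case_WN hω hxy hE hW hN hS
  · exact case_WS hω hxy hE hW hN hS
  · exact absurd hpar (by tauto)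
  · exact case_NS hω hxy hE hW hN hS
  · exact absurd hpar (by tauto)
  · exact absurd hpar (by tauto)
  · unfold slotCount
    simp [hE, hW, hN, hS]

end S7

namespace S7
open Relation Finset

/-- The upward ray from `v` crosses the segment of the contour edge `e`. -/
def crossesRay (e : BEdge) (v : ℤ × ℤ) : Prop :=
  e.2 = true ∧ (v.1 = e.1.1 ∨ v.1 = e.1.1 + 1) ∧ v.2 ≤ e.1.2

lemma ends_ne (e : BEdge) : (edgeEnds e).1 ≠ (edgeEnds e).2 := by
  obtain ⟨⟨m, n⟩, d⟩ := e
  cases d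
  · rw [ends_vert]; simp only [ne_eq, Prod.mk.injEq]; omega
  · rw [ends_horiz]; simp only [ne_eq, Prod.mk.injEq]; omega

lemma cross_vert_char {e : BEdge} {k l : ℤ} :
    crossesG e (k, l) (k, l + 1) ↔
      (e.2 = true ∧ (k = e.1.1 ∨ k = e.1.1 + 1) ∧ e.1.2 = l) := by
  obtain ⟨⟨m, n⟩, d⟩ := e
  cases d
  · rw [crossesG_vert_iff]
    simp only [Prod.mk.injEq, Bool.false_eq_true, false_and, iff_false]
    omega
  · rw [crossesG_horiz_iff]
    simp only [Prod.mk.injEq, true_and]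
    omega

lemma cross_horiz_char {e : BEdge} {k l : ℤ} :
    crossesG e (k, l) (k + 1, l) ↔
      (e.2 = false ∧ e.1.1 = k ∧ (l = e.1.2 ∨ l = e.1.2 + 1)) := by
  obtain ⟨⟨m, n⟩, d⟩ := e
  cases d
  · rw [crossesG_vert_iff]
    simp only [Prod.mk.injEq, true_and]
    omega
  · rw [crossesG_horiz_iff]
    simp only [Prod.mk.injEq, Bool.true_eq_false, false_and, iff_false]
    omega

/-- membership in the half-line `L₊` used for the horizontal-step parity identity. -/
def inLp (k l : ℤ) (P : ℤ × ℤ) : Prop := P.1 = 2 * k + 1 ∧ 2 * l < P.2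

/-- membership in the half-plane used for the bottom-ray parity identity. -/
def inRp (k : ℤ) (P : ℤ × ℤ) : Prop := 2 * k < P.1

/-- Per-edge identity for a vertical `G`-step. -/
lemma even_ray_vert (e : BEdge) (k l : ℤ) :
    Even ((if crossesRay e (k, l) then 1 else 0) + (if crossesRay e (k, l + 1) then 1 else 0) +
      (if crossesG e (k, l) (k, l + 1) then 1 else 0) : ℕ) := by
  obtain ⟨⟨m, n⟩, d⟩ := e
  cases d
  · simp [crossesRay, cross_vert_char]
  · simp only [crossesRay, cross_vert_char, eq_self_iff_true, true_and]
    by_cases hk : k = m ∨ k = m + 1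
    · simp only [hk, true_and]
      by_cases h2 : l + 1 ≤ n
      · rw [if_pos (by omega), if_pos h2, if_neg (by omega)]; decide
      · by_cases h3 : n = l
        · rw [if_pos (by omega), if_neg (by omega), if_pos h3]; decide
        · rw [if_neg (by omega), if_neg (by omega), if_neg (by omega)]
          decide
    · simp [hk]

/-- Per-edge identity for a horizontal `G`-step. -/
lemma even_ray_horiz (e : BEdge) (k l : ℤ) :
    Even ((if crossesRay e (k, l) then 1 else 0) + (if crossesRay e (k + 1, l) then 1 else 0) +
      (if crossesG e (k, l) (k + 1, l) then 1 else 0) +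
      ((if inLp k l (edgeEnds e).1 then 1 else 0) +
        (if inLp k l (edgeEnds e).2 then 1 else 0)) : ℕ) := by
  obtain ⟨⟨m, n⟩, d⟩ := e
  cases d
  · rw [ends_vert]
    unfold inLp
    simp only [crossesRay, cross_horiz_char, inLp, Bool.false_eq_true, false_and, if_false,
      eq_self_iff_true, true_and]
    by_cases hm : m = k
    · subst hm
      by_cases h1 : l = n
      · rw [if_pos (by omega), if_neg (by omega), if_pos (by omega)]; decide
      · by_cases h2 : l = n + 1
        · rw [if_pos (by omega), if_neg (by omega), if_pos (by omega)]; decide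
        · by_cases h3 : l ≤ n - 1
          · rw [if_neg (by omega), if_pos (by omega), if_pos (by omega)]; decide
          · rw [if_neg (by omega), if_neg (by omega), if_neg (by omega)]
            decide
    · rw [if_neg (by omega), if_neg (by omega), if_neg (by omega)]
      decide
  · rw [ends_horiz]
    unfold inLp
    simp only [crossesRay, cross_horiz_char, inLp, Bool.true_eq_false, false_and, if_false,
      eq_self_iff_true, true_and]
    by_cases hl : l ≤ n
    · by_cases hm1 : m = k
      · rw [if_pos (by omega), if_pos (by omega), if_neg (by omega), if_neg (by omega)]; decide
      · by_cases hm2 : m = k + 1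
        · rw [if_neg (by omega), if_pos (by omega), if_pos (by omega), if_neg (by omega)]; decide
        · by_cases hm3 : m = k - 1
          · rw [if_pos (by omega), if_neg (by omega), if_neg (by omega), if_pos (by omega)]; decide
          · rw [if_neg (by omega), if_neg (by omega), if_neg (by omega), if_neg (by omega)]
            decide
    · rw [if_neg (by omega), if_neg (by omega), if_neg (by omega), if_neg (by omega)]
      decide

/-- Per-edge identity for the full-column crossing count. -/
lemma even_line (e : BEdge) (k : ℤ) :
    Even ((if e.2 = true ∧ (k = e.1.1 ∨ k = e.1.1 + 1) then 1 else 0) +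
      ((if inRp k (edgeEnds e).1 then 1 else 0) +
        (if inRp k (edgeEnds e).2 then 1 else 0)) : ℕ) := by
  obtain ⟨⟨m, n⟩, d⟩ := e
  cases d
  · rw [ends_vert]
    unfold inRp
    simp only [inRp, Bool.false_eq_true, false_and, if_false]
    by_cases h : 2 * k < 2 * m + 1
    · rw [if_pos h]; decide
    · rw [if_neg h]; decide
  · rw [ends_horiz]
    unfold inRp
    simp only [inRp, eq_self_iff_true, true_and]
    by_cases hm1 : m = k
    · rw [if_pos (by omega), if_neg (by omega), if_pos (by omega)]; decide
    · by_cases hm2 : m = k + 1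
      · rw [if_neg (by omega), if_pos (by omega), if_pos (by omega)]; decide
      · by_cases hm3 : m ≥ k + 2
        · rw [if_neg (by omega), if_pos (by omega), if_pos (by omega)]; decide
        · by_cases hm4 : m = k - 1
          · rw [if_pos (by omega), if_neg (by omega), if_pos (by omega)]; decide
          · rw [if_neg (by omega), if_neg (by omega), if_neg (by omega)]
            decide

lemma even_sum_of_even {α : Type*} {F : Finset α} {f : α → ℕ}
    (h : ∀ e ∈ F, Even (f e)) : Even (∑ e ∈ F, f e) := by
  rw [even_iff_two_dvd]
  exact Finset.dvd_sum fun i hi => even_iff_two_dvd.1 (h i hi)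

/-- The degree of `Q` in an edge set. -/
def degAt (F : Finset BEdge) (Q : ℤ × ℤ) : ℕ :=
  (F.filter (fun e => (edgeEnds e).1 = Q ∨ (edgeEnds e).2 = Q)).card

/-- Grouping lemma: if all vertex degrees of `F` are even, then for any predicate `L`
on vertices, the number of `(edge, end)` incidences with end in `L` is even. -/
lemma sum_ends_parity (F : Finset BEdge) (L : ℤ × ℤ → Prop)
    (hdeg : ∀ Q, Even (degAt F Q)) :
    Even (∑ e ∈ F, ((if L (edgeEnds e).1 then 1 else 0) +
      (if L (edgeEnds e).2 then 1 else 0) : ℕ)) := by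
  classical
  rw [Finset.sum_add_distrib]
  rw [← Finset.card_filter, ← Finset.card_filter]
  set T := (F.image fun e => (edgeEnds e).1) ∪ (F.image fun e => (edgeEnds e).2) with hT
  have h1 : (F.filter fun e => L (edgeEnds e).1).card =
      ∑ Q ∈ T.filter L, (F.filter fun e => (edgeEnds e).1 = Q).card := by
    rw [Finset.card_eq_sum_card_fiberwise
      (f := fun e => (edgeEnds e).1) (t := T.filter L) ?_]
    · apply Finset.sum_congr rfl
      intro Q hQ
      congr 1
      rw [Finset.filter_filter]
      apply Finset.filter_congr
      intro e _
      have hLQ : L Q := (Finset.mem_filter.1 hQ).2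
      constructor
      · rintro ⟨-, h⟩; exact h
      · intro h; exact ⟨by rw [h]; exact hLQ, h⟩
    · intro e he
      rw [Finset.mem_coe, Finset.mem_filter] at he
      rw [Finset.mem_coe, Finset.mem_filter]
      refine ⟨?_, he.2⟩
      rw [hT, Finset.mem_union]
      exact Or.inl (Finset.mem_image.2 ⟨e, he.1, rfl⟩)
  have h2 : (F.filter fun e => L (edgeEnds e).2).card =
      ∑ Q ∈ T.filter L, (F.filter fun e => (edgeEnds e).2 = Q).card := by
    rw [Finset.card_eq_sum_card_fiberwise
      (f := fun e => (edgeEnds e).2) (t := T.filter L) ?_]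
    · apply Finset.sum_congr rfl
      intro Q hQ
      congr 1
      rw [Finset.filter_filter]
      apply Finset.filter_congr
      intro e _
      have hLQ : L Q := (Finset.mem_filter.1 hQ).2
      constructor
      · rintro ⟨-, h⟩; exact h
      · intro h; exact ⟨by rw [h]; exact hLQ, h⟩
    · intro e he
      rw [Finset.mem_coe, Finset.mem_filter] at he
      rw [Finset.mem_coe, Finset.mem_filter]
      refine ⟨?_, he.2⟩
      rw [hT, Finset.mem_union]
      exact Or.inr (Finset.mem_image.2 ⟨e, he.1, rfl⟩)
  rw [h1, h2, ← Finset.sum_add_distrib]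
  apply even_sum_of_even
  intro Q _
  have hsplit : (F.filter fun e => (edgeEnds e).1 = Q).card +
      (F.filter fun e => (edgeEnds e).2 = Q).card = degAt F Q := by
    unfold degAt
    rw [Finset.filter_or]
    rw [Finset.card_union_of_disjoint]
    rw [Finset.disjoint_filter]
    intro e _ h1' h2'
    exact ends_ne e (h1'.trans h2'.symm)
  rw [hsplit]
  exact hdeg Q

end S7

namespace S7
open Relation Finset

/-- Number of `F`-edges crossed by the upward ray from `v`. -/
def piCard (F : Finset BEdge) (v : ℤ × ℤ) : ℕ :=
  (F.filter (fun e => crossesRay e v)).card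

lemma pi_flip_vert (F : Finset BEdge) (k l : ℤ) :
    Even (piCard F (k, l) + piCard F (k, l + 1) +
      (F.filter (fun e => crossesG e (k, l) (k, l + 1))).card) := by
  unfold piCard
  rw [Finset.card_filter, Finset.card_filter, Finset.card_filter,
    ← Finset.sum_add_distrib, ← Finset.sum_add_distrib]
  exact even_sum_of_even fun e _ => even_ray_vert e k l

lemma pi_flip_horiz (F : Finset BEdge) (hdeg : ∀ Q, Even (degAt F Q)) (k l : ℤ) :
    Even (piCard F (k, l) + piCard F (k + 1, l) +
      (F.filter (fun e => crossesG e (k, l) (k + 1, l))).card) := by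
  have hL := sum_ends_parity F (inLp k l) hdeg
  have hmain : Even (∑ e ∈ F,
      ((if crossesRay e (k, l) then 1 else 0) + (if crossesRay e (k + 1, l) then 1 else 0) +
        (if crossesG e (k, l) (k + 1, l) then 1 else 0) +
        ((if inLp k l (edgeEnds e).1 then 1 else 0) +
          (if inLp k l (edgeEnds e).2 then 1 else 0)) : ℕ)) :=
    even_sum_of_even fun e _ => even_ray_horiz e k l
  rw [Finset.sum_add_distrib, Finset.sum_add_distrib, Finset.sum_add_distrib,
    ← Finset.card_filter, ← Finset.card_filter, ← Finset.card_filter] at hmain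
  unfold piCard
  rw [Nat.even_iff] at hmain hL ⊢
  omega

lemma pi_line_even (F : Finset BEdge) (hdeg : ∀ Q, Even (degAt F Q)) (k : ℤ) :
    Even ((F.filter (fun e => e.2 = true ∧ (k = e.1.1 ∨ k = e.1.1 + 1))).card) := by
  have hL := sum_ends_parity F (inRp k) hdeg
  have hmain : Even (∑ e ∈ F,
      ((if e.2 = true ∧ (k = e.1.1 ∨ k = e.1.1 + 1) then 1 else 0) +
        ((if inRp k (edgeEnds e).1 then 1 else 0) +
          (if inRp k (edgeEnds e).2 then 1 else 0)) : ℕ)) :=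
    even_sum_of_even fun e _ => even_line e k
  rw [Finset.sum_add_distrib, ← Finset.card_filter] at hmain
  rw [Nat.even_iff] at hmain hL ⊢
  omega

lemma piCard_zero (F : Finset BEdge) {v : ℤ × ℤ} (h : ∀ e ∈ F, ¬crossesRay e v) :
    piCard F v = 0 :=
  Finset.card_eq_zero.2 (Finset.filter_eq_empty_iff.2 h)

lemma piCard_below_even (F : Finset BEdge) (hdeg : ∀ Q, Even (degAt F Q)) {v : ℤ × ℤ}
    (h : ∀ e ∈ F, v.2 ≤ e.1.2) : Even (piCard F v) := by
  unfold piCard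
  have heq : F.filter (fun e => crossesRay e v) =
      F.filter (fun e => e.2 = true ∧ (v.1 = e.1.1 ∨ v.1 = e.1.1 + 1)) := by
    apply Finset.filter_congr
    intro e he
    unfold crossesRay
    constructor
    · rintro ⟨h1, h2, -⟩; exact ⟨h1, h2⟩
    · rintro ⟨h1, h2⟩; exact ⟨h1, h2, h e he⟩
  rw [heq]
  exact pi_line_even F hdeg v.1

lemma card_cross_zero (F : Finset BEdge) {u w : ℤ × ℤ}
    (h : ∀ e ∈ F, ¬crossesG e u w) :
    (F.filter (fun e => crossesG e u w)).card = 0 :=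
  Finset.card_eq_zero.2 (Finset.filter_eq_empty_iff.2 h)

/-- Parity of the winding count is preserved along uncrossed `G`-edges. -/
lemma pi_step (F : Finset BEdge) (hdeg : ∀ Q, Even (degAt F Q)) {a b : ℤ × ℤ}
    (hadj : ZAdj a b) (hnc : ∀ e ∈ F, ¬crossesG e a b) :
    (Even (piCard F a) ↔ Even (piCard F b)) := by
  obtain ⟨a1, a2⟩ := a
  obtain ⟨b1, b2⟩ := b
  have hnc' : ∀ e ∈ F, ¬crossesG e (b1, b2) (a1, a2) :=
    fun e he hc => hnc e he (crossesG_symm hc)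
  rw [zadj_iff] at hadj
  rcases hadj with ⟨h1, h2⟩ | ⟨h1, h2⟩ | ⟨h1, h2⟩ | ⟨h1, h2⟩ <;>
    dsimp only at h1 h2 <;> subst h1 <;> subst h2
  · have := pi_flip_horiz F hdeg a1 b2
    rw [card_cross_zero F hnc] at this
    rw [Nat.even_iff] at this ⊢
    rw [Nat.even_iff]
    omega
  · have := pi_flip_horiz F hdeg (a1 - 1) b2
    rw [show a1 - 1 + 1 = a1 by omega] at this
    rw [card_cross_zero F hnc'] at this
    rw [Nat.even_iff] at this ⊢
    rw [Nat.even_iff]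
    omega
  · have := pi_flip_vert F b1 a2
    rw [card_cross_zero F hnc] at this
    rw [Nat.even_iff] at this ⊢
    rw [Nat.even_iff]
    omega
  · have := pi_flip_vert F b1 (a2 - 1)
    rw [show a2 - 1 + 1 = a2 by omega] at this
    rw [card_cross_zero F hnc'] at this
    rw [Nat.even_iff] at this ⊢
    rw [Nat.even_iff]
    omega

/-- Parity transport along any chain of steps that never cross an `F`-edge. -/
lemma pi_rtg (F : Finset BEdge) (hdeg : ∀ Q, Even (degAt F Q))
    {P : ℤ × ℤ → ℤ × ℤ → Prop}
    (hP : ∀ a b, P a b → ZAdj a b ∧ ∀ e ∈ F, ¬crossesG e a b)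
    {u w : ℤ × ℤ} (h : Relation.ReflTransGen P u w) :
    (Even (piCard F u) ↔ Even (piCard F w)) := by
  induction h with
  | refl => exact Iff.rfl
  | tail _ hstep ih =>
    exact ih.trans (pi_step F hdeg (hP _ _ hstep).1 (hP _ _ hstep).2)

end S7

namespace S7
open Relation

/-- A `G`-step all of whose crossing present edges belong to `C`. -/
def Good (ω : Config) (C : Set BEdge) (a b : ℤ × ℤ) : Prop :=
  ZAdj a b ∧ ∀ f, contourCfg ω f = true → crossesG f a b → f ∈ C

/-- Connectivity through `Good` steps. -/
def Conn (ω : Config) (C : Set BEdge) : ℤ × ℤ → ℤ × ℤ → Prop :=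
  Relation.ReflTransGen (Good ω C)

lemma good_symm {ω : Config} {C : Set BEdge} {a b : ℤ × ℤ} (h : Good ω C a b) :
    Good ω C b a :=
  ⟨zadj_symm h.1, fun f hf hc => h.2 f hf (crossesG_symm hc)⟩

lemma conn_symm {ω : Config} {C : Set BEdge} {a b : ℤ × ℤ} (h : Conn ω C a b) :
    Conn ω C b a :=
  @Std.Symm.symm _ _ (@Relation.ReflTransGen.stdSymm _ _ ⟨fun _ _ => good_symm⟩) _ _ h

lemma conn_trans {ω : Config} {C : Set BEdge} {a b c : ℤ × ℤ} (h : Conn ω C a b)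
    (h' : Conn ω C b c) : Conn ω C a c :=
  Relation.ReflTransGen.trans h h'

lemma inc_corners {e : BEdge} {w : ℤ × ℤ} (h : EdgeIncVtx e w) :
    w = (e.1.1, e.1.2) ∨ w = (e.1.1 + 1, e.1.2) ∨ w = (e.1.1, e.1.2 + 1) ∨
      w = (e.1.1 + 1, e.1.2 + 1) := by
  obtain ⟨wx, wy⟩ := w
  obtain ⟨hx, hy⟩ := h
  simp only [Prod.mk.injEq]
  dsimp only at hx hy
  omega

lemma corner_base (e : BEdge) : EdgeIncVtx e (e.1.1, e.1.2) := ⟨Or.inl rfl, Or.inl rfl⟩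

/-- Analysis of present crossers of the horizontal `G`-step `(u₁,u₂)–(u₁+1,u₂)`:
the crosser is the vertical edge at the unique black face below/at it. -/
lemma crosser_of_horiz_step {ω : Config} {f : BEdge} {u₁ u₂ : ℤ}
    (hf : contourCfg ω f = true) (hc : crossesG f (u₁, u₂) (u₁ + 1, u₂)) :
    (f = ((u₁, u₂), false) ∧ Even (u₁ + u₂)) ∨
      (f = ((u₁, u₂ - 1), false) ∧ Even (u₁ + u₂ - 1)) := by
  obtain ⟨⟨p, q⟩, df⟩ := f
  rw [cross_horiz_char] at hc
  obtain ⟨hc1, hc2, hc3⟩ := hc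
  dsimp only at hc1 hc2 hc3
  subst hc1
  have hev : Even (p + q) := ((present_vert ω).1 hf).1
  have hp' : u₁ = p := hc2.symm
  subst hp'
  rcases hc3 with hq | hq
  · left
    have hq' : u₂ = q := hq
    subst hq'
    exact ⟨rfl, hev⟩
  · right
    have hq' : q = u₂ - 1 := by omega
    subst hq'
    exact ⟨rfl, by obtain ⟨a, ha⟩ := hev; exact ⟨a, by omega⟩⟩

/-- Analysis of present crossers of the vertical `G`-step `(u₁,u₂)–(u₁,u₂+1)`. -/
lemma crosser_of_vert_step {ω : Config} {f : BEdge} {u₁ u₂ : ℤ}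
    (hf : contourCfg ω f = true) (hc : crossesG f (u₁, u₂) (u₁, u₂ + 1)) :
    (f = ((u₁, u₂), true) ∧ Even (u₁ + u₂)) ∨
      (f = ((u₁ - 1, u₂), true) ∧ Even (u₁ - 1 + u₂)) := by
  obtain ⟨⟨p, q⟩, df⟩ := f
  rw [cross_vert_char] at hc
  obtain ⟨hc1, hc2, hc3⟩ := hc
  dsimp only at hc1 hc2 hc3
  subst hc1
  have hev : Even (p + q) := ((present_horiz ω).1 hf).1
  have hq' : u₂ = q := hc3.symm
  subst hq'
  rcases hc2 with hp | hp
  · left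
    have hp' : u₁ = p := hp
    subst hp'
    exact ⟨rfl, hev⟩
  · right
    have hp' : p = u₁ - 1 := by omega
    subst hp'
    exact ⟨rfl, hev⟩

/-- All four corners of a present edge are `Good`-connected (within any set
containing `e`). -/
lemma conn_self {ω : Config} (hω : Constrained ω) {C : Set BEdge} {e : BEdge}
    (hp : contourCfg ω e = true) (heC : e ∈ C) {w w' : ℤ × ℤ}
    (h1 : EdgeIncVtx e w) (h2 : EdgeIncVtx e w') : Conn ω C w w' := by
  obtain ⟨⟨m, n⟩, d⟩ := e
  have hall : ∀ v, EdgeIncVtx ((m, n), d) v → Conn ω C (m, n) v := by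
    intro v hv
    cases d
    · -- vertical edge at black face (m, n)
      have hev : Even (m + n) := ((present_vert ω).1 hp).1
      have g1 : Good ω C (m, n) (m + 1, n) := by
        refine ⟨zadj_mk (by omega), fun f hf hc => ?_⟩
        rcases crosser_of_horiz_step hf hc with ⟨hfe, -⟩ | ⟨hfe, hpar⟩
        · rw [hfe]; exact heC
        · exfalso; obtain ⟨a, ha⟩ := hev; obtain ⟨b, hb⟩ := hpar; omega
      have g1' : Good ω C (m, n + 1) (m + 1, n + 1) := by
        refine ⟨zadj_mk (by omega), fun f hf hc => ?_⟩
        rcases crosser_of_horiz_step hf hc with ⟨hfe, hpar⟩ | ⟨hfe, -⟩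
        · exfalso; obtain ⟨a, ha⟩ := hev; obtain ⟨b, hb⟩ := hpar; omega
        · rw [show ((m, n + 1 - 1), false) = ((m, n), false) by norm_num] at hfe
          rw [hfe]; exact heC
      have g2 : Good ω C (m, n) (m, n + 1) := by
        refine ⟨zadj_mk (by omega), fun f hf hc => ?_⟩
        exfalso
        rcases crosser_of_vert_step hf hc with ⟨hfe, -⟩ | ⟨hfe, hpar⟩
        · rw [hfe] at hf; exact not_both hω hf hp
        · obtain ⟨a, ha⟩ := hev; obtain ⟨b, hb⟩ := hpar; omega
      have g3 : Good ω C (m + 1, n) (m + 1, n + 1) := by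
        refine ⟨zadj_mk (by omega), fun f hf hc => ?_⟩
        exfalso
        rcases crosser_of_vert_step hf hc with ⟨hfe, hpar⟩ | ⟨hfe, hpar⟩
        · obtain ⟨a, ha⟩ := hev; obtain ⟨b, hb⟩ := hpar; omega
        · rw [show ((m + 1 - 1, n), true) = ((m, n), true) by norm_num] at hfe
          rw [hfe] at hf; exact not_both hω hf hp
      rcases inc_corners hv with h | h | h | h <;> dsimp only at h <;> subst h
      · exact Relation.ReflTransGen.refl
      · exact Relation.ReflTransGen.single g1
      · exact Relation.ReflTransGen.single g2
      · exact conn_trans (Relation.ReflTransGen.single g1)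
          (Relation.ReflTransGen.single g3)
    · -- horizontal edge at black face (m, n)
      have hev : Even (m + n) := ((present_horiz ω).1 hp).1
      have g1 : Good ω C (m, n) (m, n + 1) := by
        refine ⟨zadj_mk (by omega), fun f hf hc => ?_⟩
        rcases crosser_of_vert_step hf hc with ⟨hfe, -⟩ | ⟨hfe, hpar⟩
        · rw [hfe]; exact heC
        · exfalso; obtain ⟨a, ha⟩ := hev; obtain ⟨b, hb⟩ := hpar; omega
      have g1' : Good ω C (m + 1, n) (m + 1, n + 1) := by
        refine ⟨zadj_mk (by omega), fun f hf hc => ?_⟩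
        rcases crosser_of_vert_step hf hc with ⟨hfe, hpar⟩ | ⟨hfe, -⟩
        · exfalso; obtain ⟨a, ha⟩ := hev; obtain ⟨b, hb⟩ := hpar; omega
        · rw [show ((m + 1 - 1, n), true) = ((m, n), true) by norm_num] at hfe
          rw [hfe]; exact heC
      have g2 : Good ω C (m, n) (m + 1, n) := by
        refine ⟨zadj_mk (by omega), fun f hf hc => ?_⟩
        exfalso
        rcases crosser_of_horiz_step hf hc with ⟨hfe, -⟩ | ⟨hfe, hpar⟩
        · rw [hfe] at hf; exact not_both hω hp hf
        · obtain ⟨a, ha⟩ := hev; obtain ⟨b, hb⟩ := hpar; omega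
      have g3 : Good ω C (m, n + 1) (m + 1, n + 1) := by
        refine ⟨zadj_mk (by omega), fun f hf hc => ?_⟩
        exfalso
        rcases crosser_of_horiz_step hf hc with ⟨hfe, hpar⟩ | ⟨hfe, hpar⟩
        · obtain ⟨a, ha⟩ := hev; obtain ⟨b, hb⟩ := hpar; omega
        · rw [show ((m, n + 1 - 1), false) = ((m, n), false) by norm_num] at hfe
          rw [hfe] at hf; exact not_both hω hp hf
      rcases inc_corners hv with h | h | h | h <;> dsimp only at h <;> subst h
      · exact Relation.ReflTransGen.refl
      · exact Relation.ReflTransGen.single g2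
      · exact Relation.ReflTransGen.single g1
      · exact conn_trans (Relation.ReflTransGen.single g1)
          (Relation.ReflTransGen.single g3)
  exact conn_trans (conn_symm (hall w h1)) (hall w' h2)

end S7

namespace S7
open Relation

lemma shareEnd_of_common {e f : BEdge} {P : ℤ × ℤ}
    (he : P = (edgeEnds e).1 ∨ P = (edgeEnds e).2)
    (hf : (edgeEnds f).1 = P ∨ (edgeEnds f).2 = P) : shareEnd e f := by
  unfold shareEnd
  rcases he with he | he <;> rcases hf with hf | hf
  · exact Or.inl (he.symm.trans hf.symm)
  · exact Or.inr (Or.inl (he.symm.trans hf.symm))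
  · exact Or.inr (Or.inr (Or.inl (he.symm.trans hf.symm)))
  · exact Or.inr (Or.inr (Or.inr (he.symm.trans hf.symm)))

/-- Corners of two present edges sharing an end are `Good`-connected. -/
lemma conn_share {ω : Config} (hω : Constrained ω) {C : Set BEdge} {e e' : BEdge}
    (hp : contourCfg ω e = true) (hp' : contourCfg ω e' = true)
    (heC : e ∈ C) (he'C : e' ∈ C) (hs : shareEnd e e')
    (hcl : ∀ f, contourCfg ω f = true → shareEnd e f → f ∈ C)
    {w w' : ℤ × ℤ} (h1 : EdgeIncVtx e w) (h2 : EdgeIncVtx e' w') : Conn ω C w w' := by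
  -- extract the common end
  obtain ⟨P, hPe, hPe'⟩ : ∃ P, (P = (edgeEnds e).1 ∨ P = (edgeEnds e).2) ∧
      (P = (edgeEnds e').1 ∨ P = (edgeEnds e').2) := by
    unfold shareEnd at hs
    rcases hs with h | h | h | h
    · exact ⟨(edgeEnds e).1, Or.inl rfl, Or.inl h⟩
    · exact ⟨(edgeEnds e).1, Or.inl rfl, Or.inr h⟩
    · exact ⟨(edgeEnds e).2, Or.inr rfl, Or.inl h⟩
    · exact ⟨(edgeEnds e).2, Or.inr rfl, Or.inr h⟩
  obtain ⟨x, y, hxy, hPv, hse⟩ := end_form hp hPe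
  obtain ⟨x', y', hxy', hPv', hse'⟩ := end_form hp' hPe'
  have hxx : x = x' ∧ y = y' := by
    rw [hPv] at hPv'
    simp only [Prod.mk.injEq] at hPv'
    omega
  obtain ⟨hx1, hy1⟩ := hxx
  subst hx1; subst hy1
  have hQmem : ∀ f, contourCfg ω f = true →
      ((edgeEnds f).1 = (2 * x + 1, 2 * y + 1) ∨
        (edgeEnds f).2 = (2 * x + 1, 2 * y + 1)) → f ∈ C := by
    intro f hf hend
    refine hcl f hf (shareEnd_of_common hPe ?_)
    rw [← hPv] at hend
    exact hend
  have step_h : Good ω C (x, y) (x + 1, y) := by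
    refine ⟨zadj_mk (by omega), fun f hf hc => ?_⟩
    rcases crosser_of_horiz_step hf hc with ⟨hfe, hpar⟩ | ⟨hfe, hpar⟩
    · exfalso; obtain ⟨a, ha⟩ := hpar; obtain ⟨k, hk⟩ := hxy; omega
    · refine hQmem f hf (Or.inr ?_)
      rw [hfe, show ((x, y - 1), false) = slotS x y from rfl, slotS_ends]
  have step_v : Good ω C (x, y) (x, y + 1) := by
    refine ⟨zadj_mk (by omega), fun f hf hc => ?_⟩
    rcases crosser_of_vert_step hf hc with ⟨hfe, hpar⟩ | ⟨hfe, hpar⟩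
    · exfalso; obtain ⟨a, ha⟩ := hpar; obtain ⟨k, hk⟩ := hxy; omega
    · refine hQmem f hf (Or.inr ?_)
      rw [hfe, show ((x - 1, y), true) = slotW x y from rfl, slotW_ends]
  have center : ∀ se, contourCfg ω se = true → se ∈ C →
      (se = slotE x y ∨ se = slotW x y ∨ se = slotN x y ∨ se = slotS x y) →
      ∀ v, EdgeIncVtx se v → Conn ω C v (x, y) := by
    intro se hpse hseC hslots v hv
    rcases hslots with h | h | h | h <;> subst h
    · have hcorner : EdgeIncVtx (slotE x y) (x + 1, y) := ⟨Or.inl rfl, Or.inl rfl⟩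
      exact conn_trans (conn_self hω hpse hseC hv hcorner)
        (Relation.ReflTransGen.single (good_symm step_h))
    · have hcorner : EdgeIncVtx (slotW x y) (x, y) :=
        ⟨Or.inr (show x = x - 1 + 1 by omega), Or.inl rfl⟩
      exact conn_self hω hpse hseC hv hcorner
    · have hcorner : EdgeIncVtx (slotN x y) (x, y + 1) := ⟨Or.inl rfl, Or.inl rfl⟩
      exact conn_trans (conn_self hω hpse hseC hv hcorner)
        (Relation.ReflTransGen.single (good_symm step_v))
    · have hcorner : EdgeIncVtx (slotS x y) (x, y) :=
        ⟨Or.inl rfl, Or.inr (show y = y - 1 + 1 by omega)⟩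
      exact conn_self hω hpse hseC hv hcorner
  exact conn_trans (center e hp heC hse w h1)
    (conn_symm (center e' hp' he'C hse' w' h2))

/-- Corners of any two edges of one contour are `Good`-connected within the contour. -/
lemma conn_contour {ω : Config} (hω : Constrained ω) {C : Set BEdge}
    (hC : IsContour ω C) {e e' : BEdge} (he : e ∈ C) (he' : e' ∈ C)
    {w w' : ℤ × ℤ} (h1 : EdgeIncVtx e w) (h2 : EdgeIncVtx e' w') : Conn ω C w w' := by
  have hCeq := isContour_eq_contourB hC he
  have hchain : e' ∈ contourB (contourCfg ω) e := by rw [← hCeq]; exact he'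
  clear he'
  revert w' h2
  unfold contourB at hchain
  rw [Set.mem_setOf_eq] at hchain
  induction hchain with
  | refl =>
    intro w' h2
    exact conn_self hω (isContour_present hC he) he h1 h2
  | @tail b c hab hbc ih =>
    intro w' h2
    have hbC : b ∈ C := by rw [hCeq]; exact hab
    have hcC : c ∈ C := by
      rw [hCeq]; exact Relation.ReflTransGen.tail hab hbc
    have hconn_b := ih (corner_base b)
    refine conn_trans hconn_b ?_
    exact conn_share hω hbc.1 hbc.2.1 hbC hcC hbc.2.2
      (fun f hf hs => isContour_closed hC hbC hf hs) (corner_base b) h2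

end S7

namespace S7
open Relation

lemma zreach (a b : ℤ × ℤ) : Relation.ReflTransGen ZAdj a b := by
  have hx : ∀ (d : ℕ) (a b : ℤ × ℤ), (b.1 - a.1).natAbs + (b.2 - a.2).natAbs = d →
      Relation.ReflTransGen ZAdj a b := by
    intro d
    induction d with
    | zero =>
      intro a b h
      obtain ⟨a1, a2⟩ := a; obtain ⟨b1, b2⟩ := b
      dsimp only at h
      have h1 : b1 = a1 := by omega
      have h2 : b2 = a2 := by omega
      subst h1; subst h2
      exact Relation.ReflTransGen.refl
    | succ n ih =>
      intro a b h
      obtain ⟨a1, a2⟩ := a; obtain ⟨b1, b2⟩ := b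
      dsimp only at h
      by_cases h1 : a1 = b1
      · by_cases hlt : a2 < b2
        · exact Relation.ReflTransGen.head
            (show ZAdj (a1, a2) (a1, a2 + 1) from zadj_mk (by omega))
            (ih (a1, a2 + 1) (b1, b2) (by dsimp only; omega))
        · exact Relation.ReflTransGen.head
            (show ZAdj (a1, a2) (a1, a2 - 1) from zadj_mk (by omega))
            (ih (a1, a2 - 1) (b1, b2) (by dsimp only; omega))
      · by_cases hlt : a1 < b1
        · exact Relation.ReflTransGen.head
            (show ZAdj (a1, a2) (a1 + 1, a2) from zadj_mk (by omega))
            (ih (a1 + 1, a2) (b1, b2) (by dsimp only; omega))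
        · exact Relation.ReflTransGen.head
            (show ZAdj (a1, a2) (a1 - 1, a2) from zadj_mk (by omega))
            (ih (a1 - 1, a2) (b1, b2) (by dsimp only; omega))
  exact hx _ a b rfl

lemma mem_gminus {R : Set BEdge} {v w : ℤ × ℤ} : w ∈ GminusComp R v ↔
    Relation.ReflTransGen (fun a b => ZAdj a b ∧ ¬∃ e ∈ R, crossesG e a b) v w :=
  Iff.rfl

lemma exists_exit {R : Set BEdge} {s w : ℤ × ℤ} (hw : w ∉ GminusComp R s) :
    ∃ u y, u ∈ GminusComp R s ∧ ZAdj u y ∧ ∃ e ∈ R, crossesG e u y := by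
  have haux : ∀ {a b : ℤ × ℤ}, Relation.ReflTransGen ZAdj a b → a ∈ GminusComp R s →
      b ∉ GminusComp R s →
      ∃ u y, u ∈ GminusComp R s ∧ ZAdj u y ∧ ∃ e ∈ R, crossesG e u y := by
    intro a b hab
    induction hab with
    | refl => intro ha hb; exact absurd ha hb
    | @tail p c hpc hstep ih =>
      intro ha hc
      by_cases hbT : p ∈ GminusComp R s
      · by_cases hcr : ∃ e ∈ R, crossesG e p c
        · exact ⟨p, c, hbT, hstep, hcr⟩
        · exact absurd (Relation.ReflTransGen.tail hbT ⟨hstep, hcr⟩) hc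
      · exact ih ha hbT
  exact haux (zreach s w) Relation.ReflTransGen.refl hw

lemma present_has_cross {e : BEdge} :
    ∃ v, crossesG e (e.1.1, e.1.2) v := by
  obtain ⟨⟨m, n⟩, d⟩ := e
  cases d
  · exact ⟨(m + 1, n), by rw [crossesG_vert_iff]; exact Or.inl ⟨rfl, rfl⟩⟩
  · exact ⟨(m, n + 1), by rw [crossesG_horiz_iff]; exact Or.inl ⟨rfl, rfl⟩⟩

lemma exists_far_edge {C : Set BEdge} (hinf : C.Infinite) (B : ℤ) :
    ∃ e ∈ C, B < e.1.1 ∨ e.1.1 < -B ∨ B < e.1.2 ∨ e.1.2 < -B := by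
  by_contra hcon
  push_neg at hcon
  apply hinf
  have hsub : C ⊆ ((Set.Icc (-B) B ×ˢ Set.Icc (-B) B) ×ˢ (Set.univ : Set Bool)) := by
    intro e he
    obtain ⟨h1, h2, h3, h4⟩ := hcon e he
    exact ⟨⟨Set.mem_Icc.2 ⟨h2, h1⟩, Set.mem_Icc.2 ⟨h4, h3⟩⟩, Set.mem_univ _⟩
  exact Set.Finite.subset
    (Set.Finite.prod (Set.Finite.prod (Set.finite_Icc _ _) (Set.finite_Icc _ _))
      Set.finite_univ) hsub

lemma exists_topmost {A : Set (ℤ × ℤ)} (hfin : A.Finite) (hne : A.Nonempty) :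
    ∃ a ∈ A, ∀ w ∈ A, w.2 ≤ a.2 := by
  classical
  obtain ⟨w₀, hw₀⟩ := hne
  have hFne : hfin.toFinset.Nonempty := ⟨w₀, hfin.mem_toFinset.2 hw₀⟩
  obtain ⟨a, haF, hmax⟩ := hfin.toFinset.exists_max_image Prod.snd hFne
  exact ⟨a, hfin.mem_toFinset.1 haF, fun w hw => hmax w (hfin.mem_toFinset.2 hw)⟩

lemma borders_finite {A : Set (ℤ × ℤ)} (hA : A.Finite) (X : Set BEdge) :
    {e : BEdge | e ∈ X ∧ Borders A e}.Finite := by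
  have hsub : {e : BEdge | e ∈ X ∧ Borders A e} ⊆
      ⋃ a ∈ A, ((({(a.1, a.2), (a.1 - 1, a.2), (a.1, a.2 - 1), (a.1 - 1, a.2 - 1)} :
        Set (ℤ × ℤ))) ×ˢ (Set.univ : Set Bool)) := by
    rintro e ⟨-, u, v, hc, hu⟩
    have hcorner := cross_corner hc
    refine Set.mem_iUnion₂.2 ⟨u, hu, ?_⟩
    refine ⟨?_, Set.mem_univ _⟩
    obtain ⟨⟨m, n⟩, d⟩ := e
    obtain ⟨hx, hy⟩ := hcorner
    dsimp only at hx hy ⊢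
    simp only [Set.mem_insert_iff, Set.mem_singleton_iff, Prod.mk.injEq]
    omega
  apply Set.Finite.subset ?_ hsub
  apply Set.Finite.biUnion hA
  intro a _
  apply Set.Finite.prod ?_ Set.finite_univ
  apply Set.Finite.insert
  apply Set.Finite.insert
  apply Set.Finite.insert
  exact Set.finite_singleton _

lemma slot_ne_EW (x y : ℤ) : slotE x y ≠ slotW x y := by
  simp only [slotE, slotW, ne_eq, Prod.mk.injEq] <;> omega

lemma slot_ne_EN (x y : ℤ) : slotE x y ≠ slotN x y := by
  simp [slotE, slotN] <;> omega

lemma slot_ne_ES (x y : ℤ) : slotE x y ≠ slotS x y := by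
  simp [slotE, slotS] <;> omega

lemma slot_ne_WN (x y : ℤ) : slotW x y ≠ slotN x y := by
  simp [slotW, slotN] <;> omega

lemma slot_ne_WS (x y : ℤ) : slotW x y ≠ slotS x y := by
  simp [slotW, slotS] <;> omega

lemma slot_ne_NS (x y : ℤ) : slotN x y ≠ slotS x y := by
  simp only [slotN, slotS, ne_eq, Prod.mk.injEq] <;> omega

/-- The bordering set of a cluster within a contour has even degrees. -/
lemma hdeg_of_closed {ω : Config} (hω : Constrained ω) (z : ℤ × ℤ) {h₀ : BEdge}
    (hφ : contourCfg ω h₀ = true) {Fs : Set BEdge} (hFs : Fs.Finite)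
    (hmem : ∀ f, f ∈ Fs ↔
      (f ∈ contourB (contourCfg ω) h₀ ∧ Borders (cluster ω z) f)) :
    ∀ Q, Even (degAt hFs.toFinset Q) := by
  intro Q
  unfold degAt
  by_cases hne : (hFs.toFinset.filter
      (fun e => (edgeEnds e).1 = Q ∨ (edgeEnds e).2 = Q)).Nonempty
  · obtain ⟨e₀, he₀⟩ := hne
    rw [Finset.mem_filter] at he₀
    obtain ⟨he₀F, he₀Q⟩ := he₀
    have he₀X := (hmem e₀).1 (hFs.mem_toFinset.1 he₀F)
    have hpre₀ : contourCfg ω e₀ = true := mem_contour_present he₀X.1 hφ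
    obtain ⟨x, y, hxy, hQv, -⟩ := end_form hpre₀
      (by rcases he₀Q with h | h; exacts [Or.inl h.symm, Or.inr h.symm])
    have hfilter : hFs.toFinset.filter
        (fun e => (edgeEnds e).1 = Q ∨ (edgeEnds e).2 = Q)
        = ({slotE x y, slotW x y, slotN x y, slotS x y} : Finset BEdge).filter
            (fun e => contourCfg ω e = true ∧ Borders (cluster ω z) e) := by
      ext f
      simp only [Finset.mem_filter, Set.Finite.mem_toFinset, hmem, Finset.mem_insert,
        Finset.mem_singleton]
      constructor
      · rintro ⟨⟨hfX, hfB⟩, hfQ⟩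
        have hpf : contourCfg ω f = true := mem_contour_present hfX hφ
        obtain ⟨x', y', hxy', hQv', hslots'⟩ := end_form hpf
          (by rcases hfQ with h | h; exacts [Or.inl h.symm, Or.inr h.symm])
        have hxx : x = x' ∧ y = y' := by
          rw [hQv] at hQv'
          simp only [Prod.mk.injEq] at hQv'
          omega
        obtain ⟨hx1, hy1⟩ := hxx
        subst hx1; subst hy1
        exact ⟨hslots', hpf, hfB⟩
      · rintro ⟨hslots, hpf, hfB⟩
        have hfQ : (edgeEnds f).1 = Q ∨ (edgeEnds f).2 = Q := by
          rcases hslots with h | h | h | h <;> subst h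
          · left; rw [slotE_ends, hQv]
          · right; rw [slotW_ends, hQv]
          · left; rw [slotN_ends, hQv]
          · right; rw [slotS_ends, hQv]
        have hfX : f ∈ contourB (contourCfg ω) h₀ := by
          refine Relation.ReflTransGen.tail he₀X.1 ⟨hpre₀, hpf,
            shareEnd_of_common ?_ hfQ⟩
          rcases he₀Q with h | h
          exacts [Or.inl h.symm, Or.inr h.symm]
        exact ⟨⟨hfX, hfB⟩, hfQ⟩
    rw [hfilter, Finset.card_filter]
    have hn1 : slotE x y ∉ ({slotW x y, slotN x y, slotS x y} : Finset BEdge) := by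
      simp only [Finset.mem_insert, Finset.mem_singleton]
      push_neg
      exact ⟨slot_ne_EW x y, slot_ne_EN x y, slot_ne_ES x y⟩
    have hn2 : slotW x y ∉ ({slotN x y, slotS x y} : Finset BEdge) := by
      simp only [Finset.mem_insert, Finset.mem_singleton]
      push_neg
      exact ⟨slot_ne_WN x y, slot_ne_WS x y⟩
    have hn3 : slotN x y ∉ ({slotS x y} : Finset BEdge) := by
      simp only [Finset.mem_singleton]
      exact slot_ne_NS x y
    rw [show ({slotE x y, slotW x y, slotN x y, slotS x y} : Finset BEdge) =
      insert (slotE x y) (insert (slotW x y) (insert (slotN x y)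
        ({slotS x y} : Finset BEdge))) from rfl]
    rw [Finset.sum_insert hn1, Finset.sum_insert hn2, Finset.sum_insert hn3,
      Finset.sum_singleton]
    have hcount := even_at_Q hω z hxy
    unfold slotCount at hcount
    rw [Nat.even_iff] at hcount ⊢
    omega
  · rw [Finset.not_nonempty_iff_eq_empty] at hne
    rw [hne]
    simp

end S7

open S7 Relation in
/-- Lemma 2.5, I and II, of the paper: two distinct infinite contours
force an infinite cluster incident to the first of them; in particular there is an
infinite (0- or 1-)cluster. -/
theorem infinite_cluster_incident_to_contour
    (ω : Config) (hω : Constrained ω) (C₁ C₂ : Set BEdge)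
    (h₁ : IsContour ω C₁) (h₂ : IsContour ω C₂)
    (h₁i : C₁.Infinite) (h₂i : C₂.Infinite) (hne : C₁ ≠ C₂) :
    (∃ D, IsCluster ω D ∧ D.Infinite ∧ ContourIncCluster C₁ D) ∧
    (∃ D, IsCluster ω D ∧ D.Infinite) := by
  classical
  have main : ∃ D, IsCluster ω D ∧ D.Infinite ∧ ContourIncCluster C₁ D := by
    by_contra hno
    push_neg at hno
    -- every cluster incident to C₁ is finite
    have hclusterfin : ∀ v : ℤ × ℤ, (∃ e ∈ C₁, EdgeIncVtx e v) → (cluster ω v).Finite := by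
      intro v hv
      by_contra hinf
      obtain ⟨e, heC, hinc⟩ := hv
      exact hno (cluster ω v) ⟨v, rfl⟩ hinf ⟨e, heC, v, mem_cluster_self ω v, hinc⟩
    -- base edge of C₂ and its corner
    obtain ⟨e₂, he₂C, hφe₂⟩ := isContour_base h₂
    -- find a vertex of the component of v₂ (in G minus crossings of C₁) that is
    -- an endpoint of a G-edge crossed by C₁
    obtain ⟨u₀, y₀, e₀, hu₀T, he₀, hcross⟩ :
        ∃ u₀ y₀ e₀, u₀ ∈ GminusComp C₁ (e₂.1.1, e₂.1.2) ∧ e₀ ∈ C₁ ∧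
          crossesG e₀ u₀ y₀ := by
      by_cases hTuniv : ∀ p : ℤ × ℤ, p ∈ GminusComp C₁ (e₂.1.1, e₂.1.2)
      · obtain ⟨e₁, he₁C, hφe₁⟩ := isContour_base h₁
        obtain ⟨v, hv⟩ := present_has_cross (e := e₁)
        exact ⟨(e₁.1.1, e₁.1.2), v, e₁, hTuniv _, he₁C, hv⟩
      · push_neg at hTuniv
        obtain ⟨w, hw⟩ := hTuniv
        obtain ⟨u, y, huT, hadj, e, heC, hc⟩ := exists_exit hw
        exact ⟨u, y, e, huT, heC, hc⟩
    have hincu₀ : EdgeIncVtx e₀ u₀ := cross_corner hcross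
    have hAfin : (cluster ω u₀).Finite := hclusterfin u₀ ⟨e₀, he₀, hincu₀⟩
    have hAne : (cluster ω u₀).Nonempty := ⟨u₀, mem_cluster_self ω u₀⟩
    obtain ⟨⟨ax, ay⟩, haA, htop⟩ := exists_topmost hAfin hAne
    have hnotup : (ax, ay + 1) ∉ cluster ω u₀ := by
      intro hmem
      have := htop _ hmem
      dsimp only at this
      omega
    have hne_up : ω (ax, ay) ≠ ω (ax, ay + 1) := by
      intro heq
      exact hnotup (mem_cluster_step haA (zadj_mk (by omega)) heq)
    obtain ⟨m₀, hm₀, hφh, hcrossh⟩ := exists_cross_vert hω hne_up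
    -- the bordering edge set
    have hFfin : {e : BEdge | e ∈ contourB (contourCfg ω) ((m₀, ay), true) ∧
        Borders (cluster ω u₀) e}.Finite :=
      borders_finite hAfin _
    have hmemF : ∀ f, f ∈ hFfin.toFinset ↔
        (f ∈ contourB (contourCfg ω) ((m₀, ay), true) ∧
          Borders (cluster ω u₀) f) := by
      intro f
      rw [Set.Finite.mem_toFinset]
      exact Iff.rfl
    have hF_present : ∀ e ∈ hFfin.toFinset, contourCfg ω e = true :=
      fun e he => mem_contour_present ((hmemF e).1 he).1 hφh
    have hdeg : ∀ Q, Even (degAt hFfin.toFinset Q) :=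
      hdeg_of_closed hω u₀ hφh hFfin (fun f => Iff.rfl)
    -- ENCIRCLE: exactly one bordering edge crosses the upward ray from the top vertex
    have hray : hFfin.toFinset.filter (fun e => crossesRay e (ax, ay)) =
        {((m₀, ay), true)} := by
      ext f
      simp only [Finset.mem_filter, Finset.mem_singleton]
      rw [hmemF]
      constructor
      · rintro ⟨⟨hfX, hfB⟩, hfRay⟩
        obtain ⟨⟨m, n⟩, d⟩ := f
        obtain ⟨hd, hcol, hht⟩ := hfRay
        dsimp only at hd hcol hht
        subst hd
        obtain ⟨u, v, hcz, huA⟩ := hfB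
        rw [crossesG_horiz_iff] at hcz
        have hu2 : u.2 ≤ ay := htop u huA
        have hun : n = ay := by
          rcases hcz with ⟨h1, -⟩ | ⟨h1, -⟩ | ⟨h1, -⟩ | ⟨h1, -⟩ <;> subst h1 <;>
            dsimp only at hu2 <;> omega
        have hpf : contourCfg ω ((m, n), true) = true :=
          mem_contour_present hfX hφh
        have hev : Even (m + n) := ((present_horiz ω).1 hpf).1
        have hev₀ : Even (m₀ + ay) := ((present_horiz ω).1 hφh).1
        have hmm₀ : m = m₀ := by
          obtain ⟨p, hp⟩ := hev
          obtain ⟨q, hq⟩ := hev₀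
          rcases hm₀ with h | h <;> rcases hcol with h' | h' <;> omega
        simp only [Prod.mk.injEq]
        exact ⟨⟨hmm₀, hun⟩, trivial⟩
      · rintro rfl
        refine ⟨⟨Relation.ReflTransGen.refl,
          ⟨(ax, ay), (ax, ay + 1), hcrossh, haA⟩⟩, ?_, ?_, ?_⟩
        · rfl
        · dsimp only
          rcases hm₀ with h | h <;> omega
        · dsimp only
          omega
    have hodd : ¬Even (piCard hFfin.toFinset (ax, ay)) := by
      unfold piCard
      rw [hray, Finset.card_singleton]
      decide
    -- transport parity from the top vertex to u₀ along the cluster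
    have hchain0 : Even (piCard hFfin.toFinset u₀) ↔
        Even (piCard hFfin.toFinset (ax, ay)) := by
      refine pi_rtg hFfin.toFinset hdeg
        (P := fun a b => ZAdj a b ∧ ω a = ω b) ?_ haA
      intro a b hab
      exact ⟨hab.1, fun e heF hc => cross_ne hω (hF_present e heF) hc hab.2⟩
    have hoddu₀ : ¬Even (piCard hFfin.toFinset u₀) := fun h => hodd (hchain0.1 h)
    -- far vertices have even parity
    have hB : ∀ e ∈ hFfin.toFinset,
        (e.1.1 : ℤ) ≤ (hFfin.toFinset.sup fun e => e.1.1.natAbs + e.1.2.natAbs : ℕ) ∧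
        -((hFfin.toFinset.sup fun e => e.1.1.natAbs + e.1.2.natAbs : ℕ) : ℤ) ≤ e.1.1 ∧
        (e.1.2 : ℤ) ≤ (hFfin.toFinset.sup fun e => e.1.1.natAbs + e.1.2.natAbs : ℕ) ∧
        -((hFfin.toFinset.sup fun e => e.1.1.natAbs + e.1.2.natAbs : ℕ) : ℤ) ≤ e.1.2 := by
      intro e he
      have := Finset.le_sup (f := fun e : BEdge => e.1.1.natAbs + e.1.2.natAbs) he
      omega
    have hfar : ∀ {CC : Set BEdge}, CC.Infinite →
        ∃ e' ∈ CC, Even (piCard hFfin.toFinset (e'.1.1, e'.1.2)) := by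
      intro CC hCC
      obtain ⟨e', he'C, hf4⟩ := exists_far_edge hCC
        (((hFfin.toFinset.sup fun e => e.1.1.natAbs + e.1.2.natAbs : ℕ) : ℤ) + 2)
      refine ⟨e', he'C, ?_⟩
      rcases hf4 with hc | hc | hc | hc
      · have h0 : piCard hFfin.toFinset (e'.1.1, e'.1.2) = 0 := by
          apply piCard_zero
          intro e he hcr
          obtain ⟨-, hcol, -⟩ := hcr
          have := hB e he
          dsimp only at hcol
          omega
        rw [h0]; exact Even.zero
      · have h0 : piCard hFfin.toFinset (e'.1.1, e'.1.2) = 0 := by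
          apply piCard_zero
          intro e he hcr
          obtain ⟨-, hcol, -⟩ := hcr
          have := hB e he
          dsimp only at hcol
          omega
        rw [h0]; exact Even.zero
      · have h0 : piCard hFfin.toFinset (e'.1.1, e'.1.2) = 0 := by
          apply piCard_zero
          intro e he hcr
          obtain ⟨-, -, hht⟩ := hcr
          have := hB e he
          dsimp only at hht
          omega
        rw [h0]; exact Even.zero
      · apply piCard_below_even hFfin.toFinset hdeg
        intro e he
        have := hB e he
        dsimp only
        omega
    -- case split on whether the top crossing edge lies on C₁
    by_cases hhC₁ : ((m₀, ay), true) ∈ C₁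
    · -- parity transported through the component of v₂ and along C₂ : contradiction
      have hXeq : contourB (contourCfg ω) ((m₀, ay), true) = C₁ :=
        (isContour_eq_contourB h₁ hhC₁).symm
      have hFC₁ : ∀ e ∈ hFfin.toFinset, e ∈ C₁ := by
        intro e he
        rw [← hXeq]
        exact ((hmemF e).1 he).1
      have hTpar : Even (piCard hFfin.toFinset (e₂.1.1, e₂.1.2)) ↔
          Even (piCard hFfin.toFinset u₀) := by
        refine pi_rtg hFfin.toFinset hdeg
          (P := fun a b => ZAdj a b ∧ ¬∃ e ∈ C₁, crossesG e a b) ?_ hu₀T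
        intro a b hab
        exact ⟨hab.1, fun e heF hc => hab.2 ⟨e, hFC₁ e heF, hc⟩⟩
      obtain ⟨e₂', he₂', hEvenFar⟩ := hfar h₂i
      have hconn2 : Conn ω C₂ (e₂.1.1, e₂.1.2) (e₂'.1.1, e₂'.1.2) :=
        conn_contour hω h₂ he₂C he₂' (corner_base e₂) (corner_base e₂')
      have h2par : Even (piCard hFfin.toFinset (e₂.1.1, e₂.1.2)) ↔
          Even (piCard hFfin.toFinset (e₂'.1.1, e₂'.1.2)) := by
        refine pi_rtg hFfin.toFinset hdeg (P := Good ω C₂) ?_ hconn2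
        intro a b hab
        refine ⟨hab.1, fun e heF hc => ?_⟩
        exact contour_disjoint h₁ h₂ hne (hFC₁ e heF)
          (hab.2 e (hF_present e heF) hc)
      exact hoddu₀ (hTpar.1 (h2par.2 hEvenFar))
    · -- the bordering contour is disjoint from C₁; transport parity along C₁
      have hdisjX : ∀ f, f ∈ contourB (contourCfg ω) ((m₀, ay), true) →
          f ∉ C₁ := by
        intro f hfX hfC₁
        apply hhC₁
        have hh1 : contourB (contourCfg ω) ((m₀, ay), true) =
            contourB (contourCfg ω) f := contourB_eq_of_mem hfX
        have hh2 : C₁ = contourB (contourCfg ω) f := isContour_eq_contourB h₁ hfC₁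
        rw [hh2, ← hh1]
        exact Relation.ReflTransGen.refl
      obtain ⟨e₁', he₁', hEvenFar⟩ := hfar h₁i
      have hconn1 : Conn ω C₁ u₀ (e₁'.1.1, e₁'.1.2) :=
        conn_contour hω h₁ he₀ he₁' hincu₀ (corner_base e₁')
      have h1par : Even (piCard hFfin.toFinset u₀) ↔
          Even (piCard hFfin.toFinset (e₁'.1.1, e₁'.1.2)) := by
        refine pi_rtg hFfin.toFinset hdeg (P := Good ω C₁) ?_ hconn1
        intro a b hab
        refine ⟨hab.1, fun e heF hc => ?_⟩
        exact hdisjX e ((hmemF e).1 heF).1 (hab.2 e (hF_present e heF) hc)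
      exact hoddu₀ (h1par.2 hEvenFar)
  exact ⟨main, by obtain ⟨D, hD1, hD2, -⟩ := main; exact ⟨D, hD1, hD2⟩⟩

end CP

end
end
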